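/- arXiv:2208.06459 — 6 statements merged into one kernel-verified Lean document; each statement's English description precedes it below -/
import Mathlib

section
/- For every complex numbers a, b, z with b not a nonpositive integer, the Kummer confluent hypergeometric function satisfies Φ(a, b, z) = e^z · Φ(b − a, b, −z). -/
open Complex

open Polynomial Finset Filter in
private lemma ascP_ne_zero {b : ℂ} (hb : ∀ n : ℕ, b ≠ -(n : ℂ)) (k : ℕ) :
    (ascPochhammer ℂ k).eval b ≠ 0 := by
  induction k with
  | zero => simp
  | succ k ih =>
    rw [ascPochhammer_succ_eval]
    refine mul_ne_zero ih ?_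
    intro h
    exact hb k (by linear_combination h)

open Polynomial Finset Filter in
private lemma desc_smeval_eq (m : ℕ) (r : ℂ) :
    (descPochhammer ℤ m).smeval r = (descPochhammer ℂ m).eval r := by
  rw [descPochhammer_smeval_eq_ascPochhammer, ascPochhammer_smeval_eq_eval,
    ← descPochhammer_eval_eq_ascPochhammer]

open Polynomial Finset Filter in
private lemma key_vandermonde (a b : ℂ) (n : ℕ) :
    (ascPochhammer ℂ n).eval a = ∑ k ∈ range (n + 1),
      (n.choose k : ℂ) * ((ascPochhammer ℂ k).eval (b + (n - k : ℕ)) *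
        ((-1) ^ (n - k) * (ascPochhammer ℂ (n - k)).eval (b - a))) := by
  have h := Ring.descPochhammer_smeval_add (R := ℂ) (r := b + n - 1) (s := a - b) n (mul_comm _ _)
  rw [Finset.Nat.sum_antidiagonal_eq_sum_range_succ_mk] at h
  have hL : ((b + n - 1) + (a - b)) = a + n - 1 := by ring
  rw [hL, desc_smeval_eq, descPochhammer_eval_eq_ascPochhammer] at h
  have hL2 : (a + (n : ℂ) - 1 - n + 1) = a := by ring
  rw [hL2] at h
  rw [h]
  refine Finset.sum_congr rfl fun k hk => ?_
  have hkn : k ≤ n := by simpa using Nat.lt_succ_iff.mp (mem_range.mp hk)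
  rw [desc_smeval_eq, desc_smeval_eq, descPochhammer_eval_eq_ascPochhammer]
  have h1 : (b + (n : ℂ) - 1 - k + 1) = b + ((n - k : ℕ) : ℂ) := by
    rw [Nat.cast_sub hkn]; ring
  have h2 : (ascPochhammer ℂ (n - k)).eval (b - a) =
      (-1) ^ (n - k) * (descPochhammer ℂ (n - k)).eval (a - b) := by
    have := ascPochhammer_eval_neg_eq_descPochhammer (R := ℂ) (a - b) (n - k)
    rw [neg_sub] at this
    exact this
  rw [h1, h2]
  ring_nf
  rw [mul_comm (n - k) 2, pow_mul, neg_one_sq, one_pow, mul_one]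

open Polynomial Finset Filter in
private lemma summable_norm_kummer (c : ℂ) {b : ℂ} (w : ℂ) (hb : ∀ n : ℕ, b ≠ -(n : ℂ)) :
    Summable fun k : ℕ =>
      ‖(ascPochhammer ℂ k).eval c / (ascPochhammer ℂ k).eval b * w ^ k / (Nat.factorial k : ℂ)‖ := by
  set f : ℕ → ℂ := fun k =>
    (ascPochhammer ℂ k).eval c / (ascPochhammer ℂ k).eval b * w ^ k / (Nat.factorial k : ℂ) with hf
  set g : ℕ → ℂ := fun k => ((c + k) * w) / ((b + k) * (k + 1)) with hg
  have hbk : ∀ k : ℕ, (b + (k : ℂ)) ≠ 0 := by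
    intro k h
    exact hb k (by linear_combination h)
  have hrec : ∀ k : ℕ, f (k + 1) = f k * g k := by
    intro k
    simp only [hf, hg, ascPochhammer_succ_eval, Nat.factorial_succ]
    have h1 : ((Nat.factorial k : ℂ)) ≠ 0 := by exact_mod_cast (Nat.factorial_ne_zero k)
    have h2 : ((k : ℂ) + 1) ≠ 0 := by
      exact_mod_cast Nat.cast_add_one_ne_zero (R := ℂ) k
    have h3 := ascP_ne_zero hb k
    push_cast
    field_simp
    ring
  have hgt : Tendsto g atTop (nhds 0) := by
    have hinv : Tendsto (fun k : ℕ => ((k : ℂ))⁻¹) atTop (nhds 0) := by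
      have h := (Complex.continuous_ofReal.tendsto ((0 : ℝ))).comp
        tendsto_inv_atTop_nhds_zero_nat
      simpa only [Function.comp_def, Complex.ofReal_inv, Complex.ofReal_natCast,
        Complex.ofReal_zero] using h
    have hnum : Tendsto (fun k : ℕ => (c * (k : ℂ)⁻¹ + 1) * (w * (k : ℂ)⁻¹)) atTop
        (nhds ((c * 0 + 1) * (w * 0))) := by
      exact (((tendsto_const_nhds.mul hinv).add tendsto_const_nhds).mul
        (tendsto_const_nhds.mul hinv))
    have hden : Tendsto (fun k : ℕ => (b * (k : ℂ)⁻¹ + 1) * (1 + (k : ℂ)⁻¹)) atTop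
        (nhds ((b * 0 + 1) * (1 + 0))) := by
      exact (((tendsto_const_nhds.mul hinv).add tendsto_const_nhds).mul
        (tendsto_const_nhds.add hinv))
    simp only [mul_zero, zero_add, add_zero, mul_one, one_mul, mul_zero] at hnum hden
    have hdiv := hnum.div hden one_ne_zero
    rw [zero_div] at hdiv
    refine hdiv.congr' ?_
    filter_upwards [eventually_ge_atTop 1] with k hk
    have hk0 : ((k : ℂ)) ≠ 0 := by
      exact_mod_cast Nat.cast_ne_zero.mpr (Nat.one_le_iff_ne_zero.mp hk)
    simp only [hg, Pi.div_apply]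
    field_simp
  have hhalf : ∀ᶠ k in atTop, ‖g k‖ ≤ 1 / 2 := by
    have := hgt.norm
    rw [norm_zero] at this
    exact this.eventually_le_const (by norm_num)
  refine summable_of_ratio_norm_eventually_le (r := 1 / 2) (by norm_num) ?_
  filter_upwards [hhalf] with k hk
  simp only [norm_norm]
  show ‖f (k + 1)‖ ≤ 1 / 2 * ‖f k‖
  calc ‖f (k + 1)‖ = ‖f k‖ * ‖g k‖ := by rw [hrec k, norm_mul]
    _ ≤ ‖f k‖ * (1 / 2) := mul_le_mul_of_nonneg_left hk (norm_nonneg _)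
    _ = 1 / 2 * ‖f k‖ := mul_comm _ _

/-- The Kummer confluent hypergeometric function `Φ(a, b, z)`. -/
noncomputable def kummerPhi (a b z : ℂ) : ℂ :=
  ∑' k : ℕ, ((ascPochhammer ℂ k).eval a / (ascPochhammer ℂ k).eval b) * z ^ k /
    (Nat.factorial k)

open Polynomial Finset Filter in
theorem kummer_relation (a b z : ℂ) (hb : ∀ n : ℕ, b ≠ -(n : ℂ)) :
    kummerPhi a b z = Complex.exp z * kummerPhi (b - a) b (-z) := by
  have hexp : Complex.exp z = ∑' i : ℕ, z ^ i / (Nat.factorial i : ℂ) := by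
    rw [Complex.exp_eq_exp_ℂ, NormedSpace.exp_eq_tsum_div]
  have hF : Summable fun i : ℕ => ‖z ^ i / (Nat.factorial i : ℂ)‖ := by
    simpa [norm_div, norm_pow, Complex.norm_natCast] using Real.summable_pow_div_factorial ‖z‖
  have hG := summable_norm_kummer (b - a) (-z) hb
  rw [kummerPhi, kummerPhi, hexp,
    tsum_mul_tsum_eq_tsum_sum_antidiagonal_of_summable_norm hF hG]
  refine tsum_congr fun n => ?_
  rw [Finset.Nat.sum_antidiagonal_eq_sum_range_succ_mk]
  have hterm : ∀ k ∈ range (n + 1),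
      z ^ k / (Nat.factorial k : ℂ) *
        ((ascPochhammer ℂ (n - k)).eval (b - a) / (ascPochhammer ℂ (n - k)).eval b *
          (-z) ^ (n - k) / (Nat.factorial (n - k) : ℂ)) =
      (n.choose k : ℂ) * ((ascPochhammer ℂ k).eval (b + (n - k : ℕ)) *
        ((-1) ^ (n - k) * (ascPochhammer ℂ (n - k)).eval (b - a))) *
        (z ^ n / ((Nat.factorial n : ℂ) * (ascPochhammer ℂ n).eval b)) := by
    intro k hk
    have hkn : k ≤ n := Nat.lt_succ_iff.mp (mem_range.mp hk)
    have hprod : (ascPochhammer ℂ n).eval b =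
        (ascPochhammer ℂ (n - k)).eval b *
          (ascPochhammer ℂ k).eval (b + ((n - k : ℕ) : ℂ)) := by
      have h := ascPochhammer_mul (S := ℂ) (n - k) k
      have h2 := congrArg (fun p => Polynomial.eval b p) h
      simp only [Polynomial.eval_mul, Polynomial.eval_comp, Polynomial.eval_add,
        Polynomial.eval_X, Polynomial.eval_natCast] at h2
      rw [Nat.sub_add_cancel hkn] at h2
      exact h2.symm
    have hfact : (Nat.factorial n : ℂ) =
        (n.choose k : ℂ) * (Nat.factorial k : ℂ) * (Nat.factorial (n - k) : ℂ) := by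
      exact_mod_cast (Nat.choose_mul_factorial_mul_factorial hkn).symm
    have hzz : z ^ k * z ^ (n - k) = z ^ n := by rw [← pow_add, Nat.add_sub_cancel' hkn]
    have hz : z ^ k * (-z) ^ (n - k) = (-1) ^ (n - k) * z ^ n := by
      calc z ^ k * (-z) ^ (n - k) = (-1) ^ (n - k) * (z ^ k * z ^ (n - k)) := by
            rw [neg_pow]; ring
        _ = (-1) ^ (n - k) * z ^ n := by rw [hzz]
    have hE : ((-1 : ℂ)) ^ (n - k) * (-1) ^ (n - k) = 1 := by
      rw [← pow_add, Even.neg_one_pow ⟨n - k, rfl⟩]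
    have hzn : z ^ n = (-1) ^ (n - k) * (z ^ k * (-z) ^ (n - k)) := by
      rw [hz, ← mul_assoc, hE, one_mul]
    have h1 : ((Nat.factorial k : ℂ)) ≠ 0 := by exact_mod_cast Nat.factorial_ne_zero k
    have h2 : ((Nat.factorial (n - k) : ℂ)) ≠ 0 := by exact_mod_cast Nat.factorial_ne_zero (n - k)
    have h3 : (ascPochhammer ℂ (n - k)).eval b ≠ 0 := ascP_ne_zero hb (n - k)
    have h4 : (ascPochhammer ℂ k).eval (b + ((n - k : ℕ) : ℂ)) ≠ 0 := by
      refine ascP_ne_zero (fun j h => ?_) k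
      refine hb ((n - k) + j) ?_
      push_cast
      linear_combination h
    have h0 : ((n.choose k : ℕ) : ℂ) ≠ 0 := by
      exact_mod_cast (Nat.choose_pos hkn).ne'
    rw [hprod, hfact, hzn]
    generalize (ascPochhammer ℂ (n - k)).eval (b - a) = P
    generalize hQ : (ascPochhammer ℂ (n - k)).eval b = Q at h3 ⊢
    generalize hR : (ascPochhammer ℂ k).eval (b + ((n - k : ℕ) : ℂ)) = Rk at h4 ⊢
    generalize hK : ((Nat.factorial k : ℕ) : ℂ) = K at h1 ⊢
    generalize hM : ((Nat.factorial (n - k) : ℕ) : ℂ) = M at h2 ⊢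
    generalize hCh : ((n.choose k : ℕ) : ℂ) = Ch at h0 ⊢
    generalize hE2 : ((-1 : ℂ)) ^ (n - k) = E at hE ⊢
    generalize z ^ k = u
    generalize (-z) ^ (n - k) = v
    field_simp
    linear_combination -u * P * v * hE
  rw [Finset.sum_congr rfl hterm, ← Finset.sum_mul, ← key_vandermonde a b n]
  have h5 : (ascPochhammer ℂ n).eval b ≠ 0 := ascP_ne_zero hb n
  have h6 : ((Nat.factorial n : ℂ)) ≠ 0 := by exact_mod_cast Nat.factorial_ne_zero n
  field_simp
end

section
/- If a, b, z are complex numbers with Re(b) > Re(a) > 0, then Φ(a, b, z) = (Γ(b) / (Γ(a) Γ(b − a))) · ∫_0^1 e^{z t} t^{a−1} (1 − t)^{b−a−1} dt. -/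
open Complex

lemma gamma_add_nat_eq_poch (s : ℂ) (hs : 0 < s.re) (k : ℕ) :
    Complex.Gamma (s + k) = (ascPochhammer ℂ k).eval s * Complex.Gamma s := by
  induction k with
  | zero => simp
  | succ n ih =>
    have hre : 0 < (s + n).re := by
      simp only [add_re, natCast_re]
      positivity
    have hne : s + (n : ℂ) ≠ 0 := fun h => by simp [h] at hre
    have hcast : s + ((n + 1 : ℕ) : ℂ) = (s + n) + 1 := by push_cast; ring
    rw [hcast, Complex.Gamma_add_one _ hne, ih, ascPochhammer_succ_eval]
    ring

theorem kummer_integral_repr (a b z : ℂ) (ha : 0 < a.re) (hab : a.re < b.re) :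
    kummerPhi a b z =
      Complex.Gamma b / (Complex.Gamma a * Complex.Gamma (b - a)) *
        ∫ t in (0:ℝ)..1,
          Complex.exp (z * t) * (t : ℂ) ^ (a - 1) * ((1 - t : ℝ) : ℂ) ^ (b - a - 1) := by
  have hc : 0 < (b - a).re := by simp only [sub_re]; linarith
  have hb : 0 < b.re := lt_trans ha hab
  have hak : ∀ k : ℕ, 0 < (a + k).re := fun k => by
    simp only [add_re, natCast_re]; positivity
  have hbk : ∀ k : ℕ, 0 < (b + k).re := fun k => by
    simp only [add_re, natCast_re]; positivity
  set F : ℕ → ℝ → ℂ := fun k t =>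
    z ^ k / (Nat.factorial k) * ((t : ℂ) ^ (a + k - 1) * (1 - (t : ℂ)) ^ (b - a - 1)) with hF
  -- integrability of each F k on Ioc 0 1
  have hFint : ∀ k : ℕ, MeasureTheory.IntegrableOn (F k) (Set.Ioc (0:ℝ) 1) := by
    intro k
    have h := Complex.betaIntegral_convergent (hak k) hc
    rw [intervalIntegrable_iff_integrableOn_Ioc_of_le zero_le_one] at h
    exact h.const_mul _
  set G : ℝ → ℝ := fun t => ‖(t : ℂ) ^ (a - 1) * (1 - (t : ℂ)) ^ (b - a - 1)‖ with hG
  have hGint : MeasureTheory.IntegrableOn G (Set.Ioc (0:ℝ) 1) := by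
    have h := Complex.betaIntegral_convergent ha hc
    rw [intervalIntegrable_iff_integrableOn_Ioc_of_le zero_le_one] at h
    exact h.norm
  -- pointwise norm bound on Ioc
  have hbound : ∀ k : ℕ, ∀ t ∈ Set.Ioc (0:ℝ) 1,
      ‖F k t‖ ≤ ‖z‖ ^ k / (Nat.factorial k) * G t := by
    intro k t ht
    obtain ⟨ht0, ht1⟩ := ht
    have hA : ‖(t : ℂ) ^ (a + k - 1)‖ ≤ ‖(t : ℂ) ^ (a - 1)‖ := by
      rw [Complex.norm_cpow_eq_rpow_re_of_pos ht0, Complex.norm_cpow_eq_rpow_re_of_pos ht0]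
      refine Real.rpow_le_rpow_of_exponent_ge ht0 ht1 ?_
      simp only [sub_re, add_re, one_re, natCast_re]
      linarith [Nat.cast_nonneg (α := ℝ) k]
    calc ‖F k t‖
        = ‖z‖ ^ k / (Nat.factorial k) *
            (‖(t : ℂ) ^ (a + k - 1)‖ * ‖(1 - (t : ℂ)) ^ (b - a - 1)‖) := by
          simp [hF, norm_mul, norm_div, norm_pow]
      _ ≤ ‖z‖ ^ k / (Nat.factorial k) *
            (‖(t : ℂ) ^ (a - 1)‖ * ‖(1 - (t : ℂ)) ^ (b - a - 1)‖) := by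
          gcongr
      _ = ‖z‖ ^ k / (Nat.factorial k) * G t := by simp [hG, norm_mul]
  -- summability of integrals of norms
  have hsum : Summable (fun k : ℕ => ∫ t in Set.Ioc (0:ℝ) 1, ‖F k t‖) := by
    refine Summable.of_nonneg_of_le
      (fun k => MeasureTheory.integral_nonneg fun t => norm_nonneg _)
      (fun k => ?_)
      ((Real.summable_pow_div_factorial ‖z‖).mul_right (∫ t in Set.Ioc (0:ℝ) 1, G t))
    calc (∫ t in Set.Ioc (0:ℝ) 1, ‖F k t‖)
        ≤ ∫ t in Set.Ioc (0:ℝ) 1, ‖z‖ ^ k / (Nat.factorial k) * G t :=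
          MeasureTheory.setIntegral_mono_on (hFint k).norm (hGint.const_mul _)
            measurableSet_Ioc (hbound k)
      _ = ‖z‖ ^ k / (Nat.factorial k) * ∫ t in Set.Ioc (0:ℝ) 1, G t := by
          rw [MeasureTheory.integral_const_mul]
  -- swap integral and sum
  have hswap : (∫ t in Set.Ioc (0:ℝ) 1,
        Complex.exp (z * t) * (t : ℂ) ^ (a - 1) * ((1 - t : ℝ) : ℂ) ^ (b - a - 1))
      = ∑' k : ℕ, ∫ t in Set.Ioc (0:ℝ) 1, F k t := by
    refine Eq.trans ?_ (MeasureTheory.integral_tsum_of_summable_integral_norm hFint hsum).symm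
    refine MeasureTheory.setIntegral_congr_fun measurableSet_Ioc fun t ht => ?_
    obtain ⟨ht0, ht1⟩ := ht
    have htc : (t : ℂ) ≠ 0 := ofReal_ne_zero.mpr (ne_of_gt ht0)
    have hexp : ∑' k : ℕ, (z * t) ^ k / (Nat.factorial k) = Complex.exp (z * t) := by
      rw [Complex.exp_eq_exp_ℂ, NormedSpace.exp_eq_tsum_div]
    have : ∑' k : ℕ, F k t
        = ∑' k : ℕ, (z * (t : ℂ)) ^ k / (Nat.factorial k) *
            ((t : ℂ) ^ (a - 1) * (1 - (t : ℂ)) ^ (b - a - 1)) := by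
      refine tsum_congr fun k => ?_
      have hsplit : (t : ℂ) ^ (a + k - 1) = (t : ℂ) ^ (a - 1) * (t : ℂ) ^ (k : ℕ) := by
        rw [← Complex.cpow_natCast, ← Complex.cpow_add _ _ htc]
        ring_nf
      rw [hF]
      simp only [hsplit, mul_pow]
      ring
    rw [this, tsum_mul_right, hexp]
    push_cast
    ring
  -- evaluate each integral via the Beta function
  have hibeta : ∀ k : ℕ, (∫ t in Set.Ioc (0:ℝ) 1, F k t)
      = z ^ k / (Nat.factorial k) *
        (Complex.Gamma (a + k) * Complex.Gamma (b - a) / Complex.Gamma (b + k)) := by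
    intro k
    have h1 : (∫ t in Set.Ioc (0:ℝ) 1, F k t)
        = z ^ k / (Nat.factorial k) * Complex.betaIntegral (a + k) (b - a) := by
      simp only [hF]
      rw [MeasureTheory.integral_const_mul, Complex.betaIntegral,
        intervalIntegral.integral_of_le zero_le_one]
    have h2 := Complex.Gamma_mul_Gamma_eq_betaIntegral (hak k) hc
    have h3 : a + k + (b - a) = b + k := by ring
    rw [h3] at h2
    have h4 : Complex.Gamma (b + k) ≠ 0 := Complex.Gamma_ne_zero_of_re_pos (hbk k)
    have h5 : Complex.betaIntegral (a + k) (b - a)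
        = Complex.Gamma (a + k) * Complex.Gamma (b - a) / Complex.Gamma (b + k) := by
      field_simp
      linear_combination -h2
    rw [h1, h5]
  rw [intervalIntegral.integral_of_le zero_le_one, hswap]
  rw [show (∑' k : ℕ, ∫ t in Set.Ioc (0:ℝ) 1, F k t)
      = ∑' k : ℕ, z ^ k / (Nat.factorial k) *
        (Complex.Gamma (a + k) * Complex.Gamma (b - a) / Complex.Gamma (b + k)) from
    tsum_congr hibeta]
  rw [← tsum_mul_left]
  refine tsum_congr fun k => ?_
  have hGa : Complex.Gamma a ≠ 0 := Complex.Gamma_ne_zero_of_re_pos ha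
  have hGb : Complex.Gamma b ≠ 0 := Complex.Gamma_ne_zero_of_re_pos hb
  have hGc : Complex.Gamma (b - a) ≠ 0 := Complex.Gamma_ne_zero_of_re_pos hc
  have hGbk : Complex.Gamma (b + k) ≠ 0 := Complex.Gamma_ne_zero_of_re_pos (hbk k)
  have hpa := gamma_add_nat_eq_poch a ha k
  have hpb := gamma_add_nat_eq_poch b hb k
  have hQ : (ascPochhammer ℂ k).eval b ≠ 0 := by
    intro h
    rw [hpb, h, zero_mul] at hGbk
    exact hGbk rfl
  have hfac : ((Nat.factorial k : ℂ)) ≠ 0 := Nat.cast_ne_zero.mpr (Nat.factorial_ne_zero k)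
  rw [hpa, hpb]
  field_simp
end

section
/- For complex a, b, z with b not a nonpositive integer, the function f(z) = Φ(a, b, z) satisfies the Kummer differential equation z f''(z) + (b − z) f'(z) − a f(z) = 0. -/
open Complex

namespace KummerAux

/-- The coefficients of the Kummer series. -/
noncomputable def kc (a b : ℂ) (n : ℕ) : ℂ :=
  (ascPochhammer ℂ n).eval a / (ascPochhammer ℂ n).eval b / (n.factorial : ℂ)

/-- Shift operation on coefficients corresponding to differentiation. -/
noncomputable def csh (c : ℕ → ℂ) (n : ℕ) : ℂ := ((n : ℂ) + 1) * c (n + 1)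

/-- Summability hypothesis: the coefficients give an everywhere convergent series. -/
def Gd (c : ℕ → ℂ) : Prop := ∀ r : ℝ, 0 ≤ r → Summable fun n => ‖c n‖ * r ^ n

lemma add_nat_ne_zero {b : ℂ} (hb : ∀ n : ℕ, b ≠ -(n : ℂ)) (n : ℕ) : b + n ≠ 0 := by
  intro h
  exact hb n (by linear_combination h)

lemma asc_eval_ne_zero {b : ℂ} (hb : ∀ n : ℕ, b ≠ -(n : ℂ)) (n : ℕ) :
    (ascPochhammer ℂ n).eval b ≠ 0 := by
  induction n with
  | zero => simp
  | succ n ih =>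
    rw [ascPochhammer_succ_eval]
    exact mul_ne_zero ih (add_nat_ne_zero hb n)

lemma asc_eval_norm_le (a : ℂ) (n : ℕ) :
    ‖(ascPochhammer ℂ n).eval a‖ ≤ (1 + ‖a‖) ^ n * n.factorial := by
  induction n with
  | zero => simp
  | succ n ih =>
    rw [ascPochhammer_succ_eval, norm_mul]
    have h1 : ‖a + (n : ℂ)‖ ≤ (1 + ‖a‖) * (n + 1) := by
      have := norm_add_le a (n : ℂ)
      rw [Complex.norm_natCast] at this
      nlinarith [norm_nonneg a]
    calc ‖(ascPochhammer ℂ n).eval a‖ * ‖a + (n : ℂ)‖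
        ≤ ((1 + ‖a‖) ^ n * n.factorial) * ((1 + ‖a‖) * (n + 1)) := by
          apply mul_le_mul ih h1 (norm_nonneg _)
          positivity
      _ = (1 + ‖a‖) ^ (n + 1) * (n + 1).factorial := by
          rw [Nat.factorial_succ]
          push_cast
          ring

lemma exists_eps {b : ℂ} (hb : ∀ n : ℕ, b ≠ -(n : ℂ)) :
    ∃ ε : ℝ, 0 < ε ∧ ∀ n : ℕ, ε * (n + 1) ≤ ‖b + n‖ := by
  set N : ℕ := ⌈2 * ‖b‖ + 1⌉₊ with hN
  set ε : ℝ := min (1/2) ((Finset.range (N + 1)).inf' (by simp) fun i => ‖b + i‖ / (i + 1))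
    with hε
  have hpos : 0 < ε := by
    rw [hε]
    apply lt_min (by norm_num)
    rw [Finset.lt_inf'_iff]
    intro i _
    have : b + i ≠ 0 := add_nat_ne_zero hb i
    have h1 : (0 : ℝ) < ‖b + (i : ℂ)‖ := norm_pos_iff.mpr this
    positivity
  refine ⟨ε, hpos, fun n => ?_⟩
  by_cases hn : n ≤ N
  · have hmem : n ∈ Finset.range (N + 1) := Finset.mem_range.mpr (Nat.lt_succ_of_le hn)
    have h1 : ε ≤ ‖b + n‖ / (n + 1) :=
      le_trans (min_le_right _ _) (Finset.inf'_le _ hmem)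
    have h2 : (0 : ℝ) < (n : ℝ) + 1 := by positivity
    calc ε * (n + 1) ≤ (‖b + n‖ / (n + 1)) * (n + 1) := by
          apply mul_le_mul_of_nonneg_right h1 h2.le
      _ = ‖b + n‖ := by field_simp
  · push_neg at hn
    have hn' : 2 * ‖b‖ + 1 ≤ (n : ℝ) := by
      calc 2 * ‖b‖ + 1 ≤ (N : ℝ) := Nat.le_ceil _
        _ ≤ (n : ℝ) := by exact_mod_cast hn.le
    have h1 : ((n : ℝ) + 1) / 2 ≤ ‖b + n‖ := by
      have h2 : (n : ℝ) - ‖b‖ ≤ ‖b + n‖ := by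
        have := norm_add_le (b + (n:ℂ)) (-b)
        rw [show b + (n:ℂ) + -b = ((n:ℕ):ℂ) by ring, norm_neg, Complex.norm_natCast] at this
        linarith
      linarith
    have h3 : ε ≤ 1/2 := min_le_left _ _
    have h4 : (0:ℝ) ≤ (n : ℝ) + 1 := by positivity
    calc ε * (n + 1) ≤ (1/2) * (n + 1) := mul_le_mul_of_nonneg_right h3 h4
      _ ≤ ‖b + n‖ := by linarith

lemma asc_eval_norm_ge {b : ℂ} {ε : ℝ} (hε : 0 < ε) (hεb : ∀ n : ℕ, ε * (n + 1) ≤ ‖b + n‖)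
    (n : ℕ) : ε ^ n * n.factorial ≤ ‖(ascPochhammer ℂ n).eval b‖ := by
  induction n with
  | zero => simp
  | succ n ih =>
    rw [ascPochhammer_succ_eval, norm_mul]
    calc ε ^ (n + 1) * ((n+1).factorial : ℝ)
        = (ε ^ n * n.factorial) * (ε * (n + 1)) := by
          rw [Nat.factorial_succ]; push_cast; ring
      _ ≤ ‖(ascPochhammer ℂ n).eval b‖ * ‖b + n‖ := by
          apply mul_le_mul ih (hεb n) (by positivity) (norm_nonneg _)

lemma kc_gd (a b : ℂ) (hb : ∀ n : ℕ, b ≠ -(n : ℂ)) : Gd (kc a b) := by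
  obtain ⟨ε, hε, hεb⟩ := exists_eps hb
  intro r hr
  have hq : (0:ℝ) ≤ (1 + ‖a‖) / ε := by positivity
  refine Summable.of_nonneg_of_le (fun n => by positivity) (fun n => ?_)
    (Real.summable_pow_div_factorial (((1 + ‖a‖) / ε) * r))
  have hfac : (0:ℝ) < n.factorial := by exact_mod_cast Nat.factorial_pos n
  have hkc : ‖kc a b n‖ ≤ ((1 + ‖a‖) / ε) ^ n / n.factorial := by
    unfold kc
    rw [norm_div, norm_div, Complex.norm_natCast]
    have hB : (0:ℝ) < ε ^ n * n.factorial := by positivity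
    have h1 : ‖(ascPochhammer ℂ n).eval a‖ / ‖(ascPochhammer ℂ n).eval b‖
        ≤ ((1 + ‖a‖) ^ n * n.factorial) / (ε ^ n * n.factorial) := by
      apply div_le_div₀ (by positivity) (asc_eval_norm_le a n) hB (asc_eval_norm_ge hε hεb n)
    have h2 : ((1 + ‖a‖) ^ n * (n.factorial:ℝ)) / (ε ^ n * n.factorial)
        = ((1 + ‖a‖) / ε) ^ n := by
      rw [div_pow]
      field_simp
    rw [h2] at h1
    gcongr
  calc ‖kc a b n‖ * r ^ n ≤ (((1 + ‖a‖) / ε) ^ n / n.factorial) * r ^ n := by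
        apply mul_le_mul_of_nonneg_right hkc (by positivity)
    _ = (((1 + ‖a‖) / ε) * r) ^ n / n.factorial := by rw [mul_pow]; ring

lemma gd_csh {c : ℕ → ℂ} (hc : Gd c) : Gd (csh c) := by
  intro r hr
  have hs : (0:ℝ) ≤ 2 * max r 1 := by positivity
  have h1 : Summable fun n => ‖c (n + 1)‖ * (2 * max r 1) ^ (n + 1) :=
    (summable_nat_add_iff 1).mpr (hc _ hs)
  apply Summable.of_nonneg_of_le (fun n => by positivity) (fun n => ?_) h1
  unfold csh
  rw [norm_mul]
  have hn : ‖((n : ℂ) + 1)‖ = (n : ℝ) + 1 := by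
    rw [show ((n : ℂ) + 1) = ((n + 1 : ℕ) : ℂ) by push_cast; ring, Complex.norm_natCast]
    push_cast; ring
  rw [hn]
  have key : ((n : ℝ) + 1) * r ^ n ≤ (2 * max r 1) ^ (n + 1) := by
    have hA : ((n : ℝ) + 1) ≤ 2 ^ (n + 1) := by
      have := Nat.lt_two_pow_self (n := n + 1)
      exact_mod_cast this.le
    have hB : r ^ n ≤ (max r 1) ^ (n + 1) := by
      calc r ^ n ≤ (max r 1) ^ n := pow_le_pow_left₀ hr (le_max_left r 1) n
        _ ≤ (max r 1) ^ (n + 1) :=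
            pow_le_pow_right₀ (le_max_right r 1) (Nat.le_succ n)
    calc ((n : ℝ) + 1) * r ^ n ≤ 2 ^ (n + 1) * (max r 1) ^ (n + 1) :=
          mul_le_mul hA hB (by positivity) (by positivity)
      _ = (2 * max r 1) ^ (n + 1) := (mul_pow _ _ _).symm
  calc ((n:ℝ)+1) * ‖c (n + 1)‖ * r ^ n = ‖c (n+1)‖ * (((n:ℝ)+1) * r ^ n) := by ring
    _ ≤ ‖c (n + 1)‖ * (2 * max r 1) ^ (n + 1) :=
        mul_le_mul_of_nonneg_left key (norm_nonneg _)

lemma gd_summable {c : ℕ → ℂ} (hc : Gd c) (z : ℂ) : Summable fun n => c n * z ^ n := by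
  apply Summable.of_norm
  have : (fun n => ‖c n * z ^ n‖) = fun n => ‖c n‖ * ‖z‖ ^ n := by
    funext n
    rw [norm_mul, norm_pow]
  rw [this]
  exact hc ‖z‖ (norm_nonneg z)

lemma gd_hasSum {c : ℕ → ℂ} (hc : Gd c) (z : ℂ) :
    HasSum (fun n => c n * z ^ n) (∑' n, c n * z ^ n) :=
  (gd_summable hc z).hasSum

lemma hasDerivAt_gd {c : ℕ → ℂ} (hc : Gd c) (z : ℂ) :
    HasDerivAt (fun w => ∑' n, c n * w ^ n) (∑' n, csh c n * z ^ n) z := by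
  set R : ℝ := ‖z‖ + 1 with hR
  have hR1 : 1 ≤ R := by rw [hR]; have := norm_nonneg z; linarith
  have hR0 : 0 < R := by linarith
  have key := hasDerivAt_tsum_of_isPreconnected
    (y := z) (y₀ := (0:ℂ))
    (u := fun n => ‖c n‖ * (2 * R) ^ n)
    (g := fun n w => c n * w ^ n)
    (g' := fun n w => c n * ((n : ℂ) * w ^ (n - 1)))
    (hc (2 * R) (by positivity)) (Metric.isOpen_ball (x := (0:ℂ)) (ε := R))
    ((convex_ball (0:ℂ) R).isPreconnected)
    (fun n y _ => (hasDerivAt_pow n y).const_mul (c n))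
    (fun n y hy => ?_) (Metric.mem_ball_self hR0) (gd_summable hc 0) ?_
  · have hshift : HasSum (fun n => c n * ((n : ℂ) * z ^ (n - 1)))
        (∑' n, csh c n * z ^ n) := by
      have h1 : HasSum (fun n => csh c n * z ^ n) (∑' n, csh c n * z ^ n) :=
        gd_hasSum (gd_csh hc) z
      have h2 : (fun n => c (n+1) * (((n+1 : ℕ) : ℂ) * z ^ (n + 1 - 1)))
          = fun n => csh c n * z ^ n := by
        funext n
        unfold csh
        push_cast
        ring
      have h3 : HasSum (fun n => c (n+1) * (((n+1 : ℕ) : ℂ) * z ^ (n + 1 - 1)))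
          (∑' n, csh c n * z ^ n) := h2 ▸ h1
      have h4 := (hasSum_nat_add_iff (f := fun n => c n * ((n : ℂ) * z ^ (n - 1))) 1).mp h3
      simpa using h4
    rw [← hshift.tsum_eq]
    exact key
  · -- derivative bound
    rw [norm_mul, norm_mul, norm_pow, Complex.norm_natCast]
    have hy' : ‖y‖ ≤ R := by
      rw [Metric.mem_ball, dist_zero_right] at hy
      exact hy.le
    have h1 : ‖y‖ ^ (n - 1) ≤ R ^ n := by
      calc ‖y‖ ^ (n - 1) ≤ R ^ (n - 1) := pow_le_pow_left₀ (norm_nonneg y) hy' _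
        _ ≤ R ^ n := pow_le_pow_right₀ hR1 (Nat.sub_le n 1)
    have h2 : (n : ℝ) ≤ 2 ^ n := by exact_mod_cast (Nat.lt_two_pow_self (n := n)).le
    calc ‖c n‖ * ((n : ℝ) * ‖y‖ ^ (n - 1))
        ≤ ‖c n‖ * (2 ^ n * R ^ n) := by
          apply mul_le_mul_of_nonneg_left _ (norm_nonneg _)
          exact mul_le_mul h2 h1 (by positivity) (by positivity)
      _ = ‖c n‖ * (2 * R) ^ n := by rw [mul_pow]
  · rw [Metric.mem_ball, dist_zero_right]; linarith

lemma kc_rec (a b : ℂ) (hb : ∀ n : ℕ, b ≠ -(n : ℂ)) (n : ℕ) :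
    ((n : ℂ) + b) * csh (kc a b) n = ((n : ℂ) + a) * kc a b n := by
  have hB : (ascPochhammer ℂ n).eval b ≠ 0 := asc_eval_ne_zero hb n
  have hbn : b + (n : ℂ) ≠ 0 := add_nat_ne_zero hb n
  have hfac : ((n.factorial : ℂ)) ≠ 0 := Nat.cast_ne_zero.mpr (Nat.factorial_ne_zero n)
  have hn1 : ((n : ℂ) + 1) ≠ 0 := Nat.cast_add_one_ne_zero n
  unfold csh kc
  rw [ascPochhammer_succ_eval, ascPochhammer_succ_eval, Nat.factorial_succ]
  push_cast
  field_simp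
  ring

end KummerAux

open KummerAux in
theorem kummer_ode (a b : ℂ) (hb : ∀ n : ℕ, b ≠ -(n : ℂ)) (z : ℂ) :
    z * iteratedDeriv 2 (kummerPhi a b) z + (b - z) * deriv (kummerPhi a b) z
      - a * kummerPhi a b z = 0 := by
  have hc : Gd (kc a b) := kc_gd a b hb
  have hc1 : Gd (csh (kc a b)) := gd_csh hc
  have hc2 : Gd (csh (csh (kc a b))) := gd_csh hc1
  have hPhi : kummerPhi a b = fun w => ∑' n, kc a b n * w ^ n := by
    funext w
    unfold kummerPhi kc
    exact tsum_congr fun k => by ring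
  have hderiv : deriv (kummerPhi a b) = fun w => ∑' n, csh (kc a b) n * w ^ n := by
    funext w
    rw [hPhi]
    exact (hasDerivAt_gd hc w).deriv
  have hderiv2 : iteratedDeriv 2 (kummerPhi a b) z
      = ∑' n, csh (csh (kc a b)) n * z ^ n := by
    rw [show (2:ℕ) = 1 + 1 from rfl, iteratedDeriv_succ, iteratedDeriv_one, hderiv]
    exact (hasDerivAt_gd hc1 z).deriv
  rw [hderiv2, hderiv, hPhi]
  set S0 := ∑' n, kc a b n * z ^ n
  set S1 := ∑' n, csh (kc a b) n * z ^ n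
  set S2 := ∑' n, csh (csh (kc a b)) n * z ^ n
  have h0 : HasSum (fun n => kc a b n * z ^ n) S0 := gd_hasSum hc z
  have h1 : HasSum (fun n => csh (kc a b) n * z ^ n) S1 := gd_hasSum hc1 z
  have h2 : HasSum (fun n => csh (csh (kc a b)) n * z ^ n) S2 := gd_hasSum hc2 z
  -- shift lemma: from HasSum of (csh c) at z (times z) to HasSum of n * c n * z^n
  have shift : ∀ (c : ℕ → ℂ) (S : ℂ), HasSum (fun n => csh c n * z ^ n) S →
      HasSum (fun (n : ℕ) => (n : ℂ) * c n * z ^ n) (z * S) := by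
    intro c S hS
    have hS' : HasSum (fun n => z * (csh c n * z ^ n)) (z * S) := hS.mul_left z
    have heq : (fun n => ((n + 1 : ℕ) : ℂ) * c (n + 1) * z ^ (n + 1))
        = fun n => z * (csh c n * z ^ n) := by
      funext n
      unfold csh
      push_cast
      ring
    have hS'' : HasSum (fun n => ((n + 1 : ℕ) : ℂ) * c (n + 1) * z ^ (n + 1)) (z * S) :=
      heq ▸ hS'
    have h4 := (hasSum_nat_add_iff (f := fun (n : ℕ) => (n : ℂ) * c n * z ^ n) 1).mp hS''
    simpa using h4
  have P1 : HasSum (fun (n : ℕ) => (n : ℂ) * csh (kc a b) n * z ^ n) (z * S2) :=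
    shift _ _ h2
  have P3 : HasSum (fun (n : ℕ) => (n : ℂ) * kc a b n * z ^ n) (z * S1) :=
    shift _ _ h1
  have P2 : HasSum (fun n => b * (csh (kc a b) n * z ^ n)) (b * S1) := h1.mul_left b
  have P4 : HasSum (fun n => a * (kc a b n * z ^ n)) (a * S0) := h0.mul_left a
  have E := ((P1.add P2).sub P3).sub P4
  have hzero : (fun (n : ℕ) => ((n : ℂ) * csh (kc a b) n * z ^ n
      + b * (csh (kc a b) n * z ^ n)) - (n : ℂ) * kc a b n * z ^ n
      - a * (kc a b n * z ^ n)) = fun _ => (0 : ℂ) := by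
    funext n
    have := kc_rec a b hb n
    linear_combination z ^ n * this
  rw [hzero] at E
  have : z * S2 + b * S1 - z * S1 - a * S0 = 0 := E.unique hasSum_zero
  linear_combination this
end

section
/- Let n ∈ ℕ*, m ∈ ℕ, τ > 0, and Δ(s) = s^n + ∑_{k=0}^{n−1} a_k s^k + e^{−sτ} ∑_{k=0}^m α_k s^k with real coefficients. If s_0 ∈ ℝ is a root of Δ of multiplicity n+m+1, then s_0 = −a_{n−1}/n − (m+1)/τ. -/
open Polynomial

open Polynomial

noncomputable def mmIter (c : ℂ) (p : ℂ[X]) : ℕ → ℂ[X]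
  | 0 => p
  | j+1 => derivative (mmIter c p j) + c • mmIter c p j

lemma mmIter_add (c : ℂ) (p : ℂ[X]) (a : ℕ) : ∀ b, mmIter c p (a + b) = mmIter c (mmIter c p a) b
  | 0 => rfl
  | b+1 => by rw [← Nat.add_assoc]; show mmIter c p ((a+b)+1) = _; rw [mmIter, mmIter_add c p a b]; rfl

lemma mm_aux1 (c : ℂ) (j : ℕ) (F : ℕ → ℂ[X]) :
    c • (∑ i ∈ Finset.range (j+1), ((j.choose i : ℂ) * c^(j-i)) • F i)
    = ∑ i ∈ Finset.range (j+1), ((j.choose (i+1) : ℂ) * c^(j-i)) • F (i+1)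
      + (c^(j+1)) • F 0 := by
  rw [Finset.smul_sum,
    Finset.sum_range_succ' (fun i => c • (((j.choose i : ℂ) * c^(j-i)) • F i)),
    Finset.sum_range_succ (fun i => ((j.choose (i+1) : ℂ) * c^(j-i)) • F (i+1))]
  simp only [Nat.choose_succ_self, Nat.cast_zero, zero_mul, zero_smul, add_zero,
    Nat.choose_zero_right, Nat.cast_one, one_mul, Nat.sub_zero, smul_smul]
  congr 1
  · apply Finset.sum_congr rfl
    intro i hi
    rw [Finset.mem_range] at hi
    congr 1
    rw [mul_comm c, mul_assoc, ← pow_succ]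
    congr 2
    omega
  · rw [mul_comm, ← pow_succ]

lemma mmIter_eq_sum (c : ℂ) (p : ℂ[X]) : ∀ j, mmIter c p j =
    ∑ i ∈ Finset.range (j+1), ((j.choose i : ℂ) * c^(j-i)) • derivative^[i] p := by
  intro j
  induction j with
  | zero => simp [mmIter]
  | succ j ih =>
    rw [show mmIter c p (j+1) = derivative (mmIter c p j) + c • mmIter c p j from rfl, ih]
    rw [Finset.sum_range_succ' (fun i => (((j+1).choose i : ℂ) * c^(j+1-i)) • derivative^[i] p)]
    have key : ∀ i ∈ Finset.range (j+1),
        (((j+1).choose (i+1) : ℂ) * c^(j+1-(i+1))) • derivative^[i+1] p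
        = ((j.choose i : ℂ) * c^(j-i)) • derivative^[i+1] p
          + ((j.choose (i+1) : ℂ) * c^(j-i)) • derivative^[i+1] p := by
      intro i _
      rw [Nat.succ_sub_succ, Nat.choose_succ_succ, Nat.cast_add, add_mul, add_smul]
    rw [Finset.sum_congr rfl key, Finset.sum_add_distrib, mm_aux1 c j (fun i => derivative^[i] p)]
    have hD : derivative (∑ i ∈ Finset.range (j+1), ((j.choose i : ℂ) * c^(j-i)) • derivative^[i] p)
        = ∑ i ∈ Finset.range (j+1), ((j.choose i : ℂ) * c^(j-i)) • derivative^[i+1] p := by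
      rw [map_sum]
      apply Finset.sum_congr rfl
      intro i _
      rw [derivative_smul, Function.iterate_succ_apply']
    rw [hD]
    simp only [Nat.choose_zero_right, Nat.cast_one, one_mul, Nat.sub_zero,
      Function.iterate_zero_apply]
    abel

lemma mm_inv (c : ℂ) (p : ℂ[X]) : ∀ j,
    ∑ i ∈ Finset.range (j+1), ((j.choose i : ℂ) * c^(j-i)) • mmIter (-c) p i
    = derivative^[j] p := by
  intro j
  induction j with
  | zero => simp [mmIter]
  | succ j ih =>
    rw [Finset.sum_range_succ' (fun i => (((j+1).choose i : ℂ) * c^(j+1-i)) • mmIter (-c) p i)]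
    have key : ∀ i ∈ Finset.range (j+1),
        (((j+1).choose (i+1) : ℂ) * c^(j+1-(i+1))) • mmIter (-c) p (i+1)
        = ((j.choose i : ℂ) * c^(j-i)) • (derivative (mmIter (-c) p i) + (-c) • mmIter (-c) p i)
          + ((j.choose (i+1) : ℂ) * c^(j-i)) • mmIter (-c) p (i+1) := by
      intro i _
      rw [Nat.succ_sub_succ, Nat.choose_succ_succ, Nat.cast_add, add_mul, add_smul]
      rfl
    have h2 : ∑ i ∈ Finset.range (j+1),
        ((j.choose i : ℂ) * c^(j-i)) • (derivative (mmIter (-c) p i) + (-c) • mmIter (-c) p i)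
        = derivative^[j+1] p
          - c • ∑ i ∈ Finset.range (j+1), ((j.choose i : ℂ) * c^(j-i)) • mmIter (-c) p i := by
      rw [Function.iterate_succ_apply', ← ih, map_sum, Finset.smul_sum,
        ← Finset.sum_sub_distrib]
      apply Finset.sum_congr rfl
      intro i _
      rw [derivative_smul]
      module
    rw [Finset.sum_congr rfl key, Finset.sum_add_distrib, h2,
      mm_aux1 c j (fun i => mmIter (-c) p i)]
    simp only [Nat.choose_zero_right, Nat.cast_one, one_mul, Nat.sub_zero, mmIter]
    abel

lemma mm_iteratedDeriv (τ : ℝ) (P Q : ℂ[X]) (Δ : ℂ → ℂ)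
    (hΔ : ∀ s, Δ s = P.eval s + Complex.exp (-s * τ) * Q.eval s) : ∀ (j : ℕ) (s : ℂ),
    iteratedDeriv j Δ s = (derivative^[j] P).eval s
      + Complex.exp (-s * τ) * (mmIter (-(τ:ℂ)) Q j).eval s := by
  intro j
  induction j with
  | zero => intro s; simpa [mmIter] using hΔ s
  | succ j ih =>
    intro s
    rw [iteratedDeriv_succ]
    have hfun : iteratedDeriv j Δ = fun s => (derivative^[j] P).eval s
        + Complex.exp (-s * τ) * (mmIter (-(τ:ℂ)) Q j).eval s := funext ih
    rw [hfun]
    have h1 : HasDerivAt (fun s : ℂ => (derivative^[j] P).eval s)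
        ((derivative^[j+1] P).eval s) s := by
      rw [Function.iterate_succ_apply']
      exact Polynomial.hasDerivAt _ s
    have h2 : HasDerivAt (fun s : ℂ => Complex.exp (-s * τ))
        (Complex.exp (-s * τ) * (-1 * τ)) s :=
      ((hasDerivAt_id s).neg.mul_const (τ:ℂ)).cexp
    have h3 : HasDerivAt (fun s : ℂ => (mmIter (-(τ:ℂ)) Q j).eval s)
        ((derivative (mmIter (-(τ:ℂ)) Q j)).eval s) s := Polynomial.hasDerivAt _ s
    have := (h1.add (h2.mul h3)).deriv
    refine this.trans ?_
    show _ = _ + Complex.exp (-s * τ) *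
      (derivative (mmIter (-(τ:ℂ)) Q j) + (-(τ:ℂ)) • mmIter (-(τ:ℂ)) Q j).eval s
    rw [eval_add, eval_smul]
    simp only [smul_eq_mul]
    ring

open Complex

theorem max_multiplicity_s0_relation (n : ℕ) (hn : 0 < n) (m : ℕ) (τ : ℝ) (hτ : 0 < τ)
    (a α : ℕ → ℝ) (s₀ : ℝ)
    (Δ : ℂ → ℂ)
    (hΔ : ∀ s : ℂ, Δ s = s ^ n + (∑ k ∈ Finset.range n, (a k : ℂ) * s ^ k) +
      Complex.exp (-s * τ) * ∑ k ∈ Finset.range (m + 1), (α k : ℂ) * s ^ k)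
    (hmult : ∀ j ≤ n + m, iteratedDeriv j Δ (s₀ : ℂ) = 0) :
    s₀ = -a (n - 1) / n - (m + 1) / τ := by
  classical
  set P : ℂ[X] := X^n + ∑ k ∈ Finset.range n, C (a k : ℂ) * X^k with hPdef
  set Q : ℂ[X] := ∑ k ∈ Finset.range (m+1), C (α k : ℂ) * X^k with hQdef
  have hΔ' : ∀ s : ℂ, Δ s = P.eval s + Complex.exp (-s * τ) * Q.eval s := by
    intro s
    rw [hΔ s, hPdef, hQdef]
    simp [eval_finset_sum]
  have hform := mm_iteratedDeriv τ P Q Δ hΔ'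
  have hE : Complex.exp (-(s₀:ℂ) * τ) ≠ 0 := Complex.exp_ne_zero _
  have hcond : ∀ j ≤ n + m, (derivative^[j] P).eval (s₀:ℂ)
      = -(Complex.exp (-(s₀:ℂ) * τ) * (mmIter (-(τ:ℂ)) Q j).eval (s₀:ℂ)) := by
    intro j hj
    have h := hmult j hj
    rw [hform j s₀] at h
    linear_combination h
  have hQdeg : Q.natDegree ≤ m := by
    apply natDegree_sum_le_of_forall_le
    intro k hk
    exact (natDegree_C_mul_X_pow_le _ _).trans (Nat.le_of_lt_succ (Finset.mem_range.mp hk))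
  have hstep1 : ∀ j, m + 1 ≤ j → j ≤ n + m → (mmIter (τ:ℂ) P j).eval (s₀:ℂ) = 0 := by
    intro j hj1 hj2
    rw [mmIter_eq_sum, eval_finset_sum]
    have hterm : ∀ i ∈ Finset.range (j+1),
        eval (s₀:ℂ) (((j.choose i : ℂ) * (τ:ℂ)^(j-i)) • derivative^[i] P)
        = -(Complex.exp (-(s₀:ℂ) * τ) *
            (((j.choose i : ℂ) * (τ:ℂ)^(j-i)) * (mmIter (-(τ:ℂ)) Q i).eval (s₀:ℂ))) := by
      intro i hi
      rw [eval_smul, smul_eq_mul,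
        hcond i (le_trans (Nat.le_of_lt_succ (Finset.mem_range.mp hi)) hj2)]
      ring
    rw [Finset.sum_congr rfl hterm]
    have h2 : (derivative^[j] Q) = 0 :=
      iterate_derivative_eq_zero (lt_of_le_of_lt hQdeg (by omega))
    have h3 := congrArg (eval (s₀:ℂ)) (mm_inv (τ:ℂ) Q j)
    rw [eval_finset_sum] at h3
    simp only [eval_smul, smul_eq_mul] at h3
    rw [Finset.sum_neg_distrib, ← Finset.mul_sum, h3, h2, eval_zero, mul_zero, neg_zero]
  have hR : ∀ i, mmIter (τ:ℂ) (mmIter (τ:ℂ) P (m+1)) i = mmIter (τ:ℂ) P (m+1+i) :=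
    fun i => (mmIter_add _ _ _ i).symm
  have hstep2 : (derivative^[n-1] (mmIter (τ:ℂ) P (m+1))).eval (s₀:ℂ) = 0 := by
    have hinv := mm_inv (-(τ:ℂ)) (mmIter (τ:ℂ) P (m+1)) (n-1)
    simp only [neg_neg] at hinv
    rw [← hinv, eval_finset_sum]
    apply Finset.sum_eq_zero
    intro i hi
    rw [eval_smul, smul_eq_mul, hR i,
      hstep1 (m+1+i) (by omega) (by have := Finset.mem_range.mp hi; omega), mul_zero]
  -- coefficient facts
  have hPn : P.coeff n = 1 := by
    simp [hPdef, coeff_X_pow, finset_sum_coeff, coeff_C_mul, mul_ite, mul_one, mul_zero,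
      Finset.sum_ite_eq]
  have hPn1 : P.coeff (n-1) = (a (n-1) : ℂ) := by
    have h1 : ¬ (n - 1 = n) := by omega
    have h2 : n - 1 ∈ Finset.range n := Finset.mem_range.mpr (by omega)
    simp [hPdef, coeff_X_pow, finset_sum_coeff, coeff_C_mul, mul_ite, mul_one, mul_zero,
      Finset.sum_ite_eq, h1, h2]
  have hPhigh : ∀ l, n < l → P.coeff l = 0 := by
    intro l hl
    have h1 : ¬ (l = n) := by omega
    have h2 : l ∉ Finset.range n := by simp; omega
    simp [hPdef, coeff_X_pow, finset_sum_coeff, coeff_C_mul, mul_ite, mul_one, mul_zero,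
      Finset.sum_ite_eq, h1, h2]
  have hPdeg : P.natDegree ≤ n := by
    apply (natDegree_add_le _ _).trans
    simp only [natDegree_X_pow, max_le_iff, le_refl, true_and]
    apply natDegree_sum_le_of_forall_le
    intro k hk
    exact (natDegree_C_mul_X_pow_le _ _).trans (le_of_lt (Finset.mem_range.mp hk))
  have hRn : (mmIter (τ:ℂ) P (m+1)).coeff n = (τ:ℂ)^(m+1) := by
    rw [mmIter_eq_sum, finset_sum_coeff, Finset.sum_eq_single 0]
    · simp [hPn]
    · intro b _ hb
      rw [coeff_smul, coeff_iterate_derivative, hPhigh (n+b) (by omega), smul_zero, smul_zero]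
    · intro h
      simp at h
  have hRn1 : (mmIter (τ:ℂ) P (m+1)).coeff (n-1)
      = (τ:ℂ)^(m+1) * (a (n-1) : ℂ) + (m+1) * (τ:ℂ)^m * n := by
    rw [mmIter_eq_sum, finset_sum_coeff]
    rw [Finset.sum_range_succ', Finset.sum_range_succ']
    have hzero : ∑ i ∈ Finset.range m,
        (((((m+1).choose (i+1+1) : ℂ)) * (τ:ℂ)^(m+1-(i+1+1))) • derivative^[i+1+1] P).coeff (n-1)
        = 0 := by
      apply Finset.sum_eq_zero
      intro i _
      rw [coeff_smul, coeff_iterate_derivative, hPhigh (n-1+(i+1+1)) (by omega), smul_zero,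
        smul_zero]
    rw [hzero, zero_add]
    have e1 : n - 1 + 1 = n := by omega
    rw [coeff_smul, coeff_smul, coeff_iterate_derivative, coeff_iterate_derivative, e1]
    simp only [Nat.zero_add, Nat.add_zero, zero_add, add_zero, Nat.descFactorial_one,
      Nat.descFactorial_zero, Nat.choose_one_right, Nat.choose_zero_right, Nat.cast_one, one_mul,
      pow_zero, one_smul, Nat.add_sub_cancel, hPn, hPn1, smul_eq_mul, nsmul_eq_mul, mul_one]
    push_cast
    ring
  have hRdeg : (mmIter (τ:ℂ) P (m+1)).natDegree ≤ n := by
    rw [mmIter_eq_sum]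
    apply natDegree_sum_le_of_forall_le
    intro i _
    exact (natDegree_smul_le _ _).trans ((natDegree_iterate_derivative _ _).trans (by omega))
  have hDdeg : (derivative^[n-1] (mmIter (τ:ℂ) P (m+1))).natDegree < 2 :=
    lt_of_le_of_lt ((natDegree_iterate_derivative _ _).trans (by omega)) one_lt_two
  have hkey0 : (derivative^[n-1] (mmIter (τ:ℂ) P (m+1))).coeff 0
      + (derivative^[n-1] (mmIter (τ:ℂ) P (m+1))).coeff 1 * s₀ = 0 := by
    have h := hstep2
    rw [eval_eq_sum_range' hDdeg (s₀:ℂ)] at h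
    simpa [Finset.sum_range_succ] using h
  have hdf : n.descFactorial (n-1) = n.factorial := by
    have h := Nat.descFactorial_succ n (n-1)
    have e3 : n - 1 + 1 = n := by omega
    have e4 : n - (n-1) = 1 := by omega
    rw [e3, e4, one_mul] at h
    rw [← h, Nat.descFactorial_self]
  have hc1 : (derivative^[n-1] (mmIter (τ:ℂ) P (m+1))).coeff 1
      = (n.factorial : ℂ) * (τ:ℂ)^(m+1) := by
    rw [coeff_iterate_derivative]
    have e2 : 1 + (n-1) = n := by omega
    rw [e2, hRn, hdf, nsmul_eq_mul]
  have hc0 : (derivative^[n-1] (mmIter (τ:ℂ) P (m+1))).coeff 0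
      = ((n-1).factorial : ℂ) * ((τ:ℂ)^(m+1) * (a (n-1) : ℂ) + (m+1) * (τ:ℂ)^m * n) := by
    rw [coeff_iterate_derivative, zero_add, hRn1, Nat.descFactorial_self, nsmul_eq_mul]
  have hkey : ((n-1).factorial : ℂ) * ((τ:ℂ)^(m+1) * (a (n-1) : ℂ) + (m+1) * (τ:ℂ)^m * n)
      + (n.factorial : ℂ) * (τ:ℂ)^(m+1) * (s₀:ℂ) = 0 := by
    rw [hc0, hc1] at hkey0
    linear_combination hkey0
  have hkeyR : ((n-1).factorial : ℝ) * (τ^(m+1) * a (n-1) + (m+1) * τ^m * n)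
      + (n.factorial : ℝ) * τ^(m+1) * s₀ = 0 := by
    exact_mod_cast hkey
  have hfac : ((n-1).factorial : ℝ) ≠ 0 := Nat.cast_ne_zero.mpr (Nat.factorial_ne_zero _)
  have hτ0 : τ ≠ 0 := ne_of_gt hτ
  have hn0 : (n:ℝ) ≠ 0 := Nat.cast_ne_zero.mpr (by omega)
  have hnfac : (n.factorial : ℝ) = n * (n-1).factorial := by
    rw [← Nat.mul_factorial_pred hn.ne']
    push_cast
    ring
  rw [hnfac] at hkeyR
  have h2 : ((n-1).factorial : ℝ) * τ^m * (τ * a (n-1) + (m+1)*n + n*τ*s₀) = 0 := by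
    rw [pow_succ] at hkeyR
    linear_combination hkeyR
  have h3 : τ * a (n-1) + (m+1)*n + n*τ*s₀ = 0 := by
    rcases mul_eq_zero.mp h2 with h | h
    · exact absurd h (mul_ne_zero hfac (pow_ne_zero _ hτ0))
    · exact h
  field_simp
  linarith [h3]
end

section
/- Let a, b ∈ ℝ with b ≥ 2 and b > 2a. Then every root z ∈ ℂ, z ≠ 0, of the Kummer function Φ(a, b, ·) satisfies Re(z) > 0. -/
open Complex

namespace KummerProof

open Filter

noncomputable def pc (a b : ℝ) (k : ℕ) : ℂ :=
  (ascPochhammer ℂ k).eval (a : ℂ) / (ascPochhammer ℂ k).eval (b : ℂ) / (Nat.factorial k : ℂ)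

lemma ascP_ofReal (r : ℝ) (k : ℕ) :
    (ascPochhammer ℂ k).eval (r : ℂ) = (((ascPochhammer ℝ k).eval r : ℝ) : ℂ) := by
  induction k with
  | zero => simp
  | succ n ih => rw [ascPochhammer_succ_eval, ascPochhammer_succ_eval, ih]; push_cast; ring

lemma ascP_pos {x : ℝ} (hx : 0 < x) (k : ℕ) : 0 < (ascPochhammer ℝ k).eval x := by
  induction k with
  | zero => simp
  | succ n ih =>
    rw [ascPochhammer_succ_eval]
    have h : (0:ℝ) < x + n := by positivity
    exact mul_pos ih h

lemma ascP_factorial_le {x : ℝ} (hx : 2 ≤ x) (k : ℕ) :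
    ((Nat.factorial (k+1) : ℝ)) ≤ (ascPochhammer ℝ k).eval x := by
  induction k with
  | zero => simp
  | succ n ih =>
    rw [ascPochhammer_succ_eval]
    have h1 : (0:ℝ) < (Nat.factorial (n+1) : ℝ) := by positivity
    have h2 : ((n:ℝ)+2) ≤ x + n := by linarith
    have h3 : (0:ℝ) ≤ x + n := by linarith
    calc (Nat.factorial (n+1+1) : ℝ) = (Nat.factorial (n+1) : ℝ) * ((n:ℝ)+2) := by
          rw [Nat.factorial_succ (n+1)]; push_cast; ring
      _ ≤ (ascPochhammer ℝ n).eval x * (x + n) :=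
          mul_le_mul ih h2 (by positivity) (le_trans h1.le ih)
  
lemma ascP_abs_le (x : ℝ) (k : ℕ) :
    |(ascPochhammer ℝ k).eval x| ≤ (ascPochhammer ℝ k).eval (|x|+1) := by
  induction k with
  | zero => simp
  | succ n ih =>
    rw [ascPochhammer_succ_eval, ascPochhammer_succ_eval, abs_mul]
    have h1 : |x + (n:ℝ)| ≤ |x| + 1 + n := by
      calc |x + (n:ℝ)| ≤ |x| + |(n:ℝ)| := abs_add_le _ _
        _ = |x| + n := by rw [_root_.abs_of_nonneg (by positivity : (0:ℝ) ≤ (n:ℝ))]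
        _ ≤ |x| + 1 + n := by linarith
    exact mul_le_mul ih h1 (abs_nonneg _) (le_of_lt (ascP_pos (by positivity) n))

lemma pc_rec (a b : ℝ) (hb : 2 ≤ b) (k : ℕ) :
    ((k:ℂ)+1) * ((k:ℂ) + (b:ℂ)) * pc a b (k+1) = ((a:ℂ) + k) * pc a b k := by
  have hBpos := ascP_pos (x := b) (by linarith) k
  have hB : (ascPochhammer ℂ k).eval (b:ℂ) ≠ 0 := by
    rw [ascP_ofReal]; exact_mod_cast hBpos.ne'
  have hbk : ((b:ℂ) + (k:ℂ)) ≠ 0 := by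
    have h : ((b + (k:ℝ) : ℝ) : ℂ) ≠ 0 := by
      have : (0:ℝ) < b + k := by positivity
      exact_mod_cast this.ne'
    push_cast at h; exact h
  have hfac : ((Nat.factorial k : ℂ)) ≠ 0 := by exact_mod_cast (Nat.factorial_pos k).ne'
  have hk1 : ((k:ℂ)+1) ≠ 0 := Nat.cast_add_one_ne_zero k
  rw [pc, pc, ascPochhammer_succ_eval, ascPochhammer_succ_eval, Nat.factorial_succ]
  push_cast
  field_simp
  ring


def SerOK (d : ℕ → ℂ) : Prop := ∀ R : ℝ, 0 < R → Summable fun k => ‖d k‖ * R ^ k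

lemma SerOK.summable {d : ℕ → ℂ} (hd : SerOK d) (z : ℂ) :
    Summable fun k => d k * z ^ k := by
  apply Summable.of_norm_bounded (hd (‖z‖ + 1) (by positivity))
  intro k
  rw [norm_mul, norm_pow]
  exact mul_le_mul_of_nonneg_left (pow_le_pow_left₀ (norm_nonneg z) (by linarith) k)
    (norm_nonneg _)

lemma SerOK.deriv {d : ℕ → ℂ} (hd : SerOK d) :
    SerOK (fun k => ((k:ℂ)+1) * d (k+1)) := by
  intro R hR
  have h := ((hd (2*R) (by positivity)).comp_injective Nat.succ_injective).mul_left (1/R)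
  apply Summable.of_nonneg_of_le (fun k => by positivity) _ h
  intro k
  show ‖((k:ℂ)+1) * d (k+1)‖ * R ^ k ≤ 1/R * (‖d (k+1)‖ * (2*R) ^ (k+1))
  rw [norm_mul]
  have h1 : ‖((k:ℂ)+1)‖ = ((k+1 : ℕ) : ℝ) := by
    rw [show ((k:ℂ)+1) = ((k+1 : ℕ) : ℂ) by push_cast; ring, Complex.norm_natCast]
  have h2 : ((k+1 : ℕ) : ℝ) ≤ 2 ^ (k+1) := by
    exact_mod_cast (Nat.lt_two_pow_self (n := k+1)).le
  rw [h1, mul_pow, div_mul_eq_mul_div, one_mul, le_div_iff₀ hR]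
  calc ((k+1:ℕ):ℝ) * ‖d (k+1)‖ * R ^ k * R = ((k+1:ℕ):ℝ) * (‖d (k+1)‖ * R ^ (k+1)) := by ring
    _ ≤ 2 ^ (k+1) * (‖d (k+1)‖ * R ^ (k+1)) := by
        apply mul_le_mul_of_nonneg_right h2; positivity
    _ = ‖d (k+1)‖ * (2 ^ (k+1) * R ^ (k+1)) := by ring

lemma SerOK.mul_nat {d : ℕ → ℂ} (hd : SerOK d) :
    SerOK (fun k => (k:ℂ) * d k) := by
  intro R hR
  apply Summable.of_nonneg_of_le (fun k => by positivity) _ (hd (2*R) (by positivity))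
  intro k
  show ‖(k:ℂ) * d k‖ * R ^ k ≤ ‖d k‖ * (2*R) ^ k
  rw [norm_mul, Complex.norm_natCast, mul_pow]
  have h2 : ((k : ℕ) : ℝ) ≤ 2 ^ k := by exact_mod_cast (Nat.lt_two_pow_self (n := k)).le
  calc (k:ℝ) * ‖d k‖ * R ^ k ≤ 2 ^ k * ‖d k‖ * R ^ k := by
        apply mul_le_mul_of_nonneg_right _ (by positivity)
        exact mul_le_mul_of_nonneg_right h2 (norm_nonneg _)
    _ = ‖d k‖ * (2 ^ k * R ^ k) := by ring

lemma SerOK.hasDerivAt {d : ℕ → ℂ} (hd : SerOK d) (z : ℂ) :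
    HasDerivAt (fun w => ∑' k, d k * w ^ k) (∑' k : ℕ, ((k:ℂ)+1) * d (k+1) * z ^ k) z := by
  have hR : 0 < ‖z‖ + 1 := by positivity
  have hzball : z ∈ Metric.ball (0:ℂ) (‖z‖+1) := by
    rw [Metric.mem_ball, dist_zero_right]; linarith
  have hus : Summable (fun n => 1/(‖z‖+1) * (‖d n‖ * (2*(‖z‖+1)) ^ n)) :=
    (hd (2*(‖z‖+1)) (by positivity)).mul_left _
  have key : HasDerivAt (fun w => ∑' k, d k * w ^ k)
      (∑' k : ℕ, d k * ((k:ℂ) * z ^ (k-1))) z := by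
    apply hasDerivAt_tsum_of_isPreconnected hus
      (Metric.isOpen_ball (x := (0:ℂ)) (ε := ‖z‖+1))
      ((convex_ball (0:ℂ) (‖z‖+1)).isPreconnected)
      (fun n w _ => (hasDerivAt_pow n w).const_mul (d n))
      ?_ hzball (hd.summable z) hzball
    intro n w hw
    rw [Metric.mem_ball, dist_zero_right] at hw
    rw [norm_mul, norm_mul, norm_pow, Complex.norm_natCast]
    rcases Nat.eq_zero_or_pos n with rfl | hn
    · simp; positivity
    · have hb : ‖w‖ ^ (n-1) ≤ (‖z‖+1) ^ (n-1) :=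
        pow_le_pow_left₀ (norm_nonneg _) hw.le _
      have h2 : (n:ℝ) ≤ 2 ^ n := by exact_mod_cast (Nat.lt_two_pow_self (n := n)).le
      have hRn : (‖z‖+1) ^ (n-1) * (‖z‖+1) = (‖z‖+1) ^ n := by
        rw [← pow_succ, Nat.sub_add_cancel hn]
      rw [mul_pow, div_mul_eq_mul_div, one_mul, le_div_iff₀ hR]
      calc ‖d n‖ * ((n:ℝ) * ‖w‖ ^ (n-1)) * (‖z‖+1)
            ≤ ‖d n‖ * ((2:ℝ)^n * (‖z‖+1) ^ (n-1)) * (‖z‖+1) := by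
              apply mul_le_mul_of_nonneg_right _ hR.le
              apply mul_le_mul_of_nonneg_left _ (norm_nonneg _)
              exact mul_le_mul h2 hb (by positivity) (by positivity)
        _ = ‖d n‖ * ((2:ℝ)^n * (‖z‖+1) ^ n) := by
              rw [mul_assoc ‖d n‖, mul_assoc, hRn]
  have hs : Summable fun k => d (k+1) * (((k+1:ℕ):ℂ) * z ^ k) := by
    apply ((hd.deriv).summable z).congr
    intro k; push_cast; ring
  have hsum : Summable fun k => d k * ((k:ℂ) * z ^ (k-1)) := by
    apply (summable_nat_add_iff 1).mp
    exact hs.congr (fun k => by norm_num)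
  rw [show (∑' k : ℕ, d k * ((k:ℂ) * z ^ (k-1))) = ∑' k : ℕ, ((k:ℂ)+1) * d (k+1) * z ^ k from ?_] at key
  · exact key
  rw [Summable.tsum_eq_zero_add hsum]
  simp only [Nat.cast_zero, zero_mul, mul_zero, zero_add]
  apply tsum_congr
  intro k
  push_cast
  ring
lemma summable_Q (A R : ℝ) (hA : 0 ≤ A) (hR : 0 < R) :
    Summable (fun k : ℕ =>
      (ascPochhammer ℝ k).eval (A+1) * R^k / ((Nat.factorial (k+1) : ℝ) * (Nat.factorial k))) := by
  set v : ℕ → ℝ := fun k =>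
    (ascPochhammer ℝ k).eval (A+1) * R^k / ((Nat.factorial (k+1) : ℝ) * (Nat.factorial k)) with hv
  have hvpos : ∀ k, 0 < v k := by
    intro k
    have h1 := ascP_pos (x := A+1) (by linarith) k
    have h2 : (0:ℝ) < (Nat.factorial (k+1) : ℝ) := by positivity
    have h3 : (0:ℝ) < (Nat.factorial k : ℝ) := by positivity
    rw [hv]
    positivity
  apply summable_of_ratio_norm_eventually_le (r := 1/2) (by norm_num)
  rw [Filter.eventually_atTop]
  refine ⟨⌈2*(A+1)*R⌉₊, fun k hk => ?_⟩
  have hk' : 2*(A+1)*R ≤ (k:ℝ) := le_trans (Nat.le_ceil _) (Nat.cast_le.2 hk)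
  rw [Real.norm_eq_abs, Real.norm_eq_abs, abs_of_pos (hvpos _), abs_of_pos (hvpos _)]
  have e1 : v (k+1) = v k * ((A+1+k)*R/(((k:ℝ)+2)*((k:ℝ)+1))) := by
    rw [hv]
    simp only []
    rw [ascPochhammer_succ_eval, Nat.factorial_succ (k+1), Nat.factorial_succ k]
    have h2 : (0:ℝ) < (Nat.factorial (k+1) : ℝ) := by positivity
    have h3 : (0:ℝ) < (Nat.factorial k : ℝ) := by positivity
    push_cast
    field_simp
    ring
  have hfac : (A+1+k)*R/(((k:ℝ)+2)*((k:ℝ)+1)) ≤ 1/2 := by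
    rw [div_le_iff₀ (by positivity)]
    have h5 : (A+1+k)*R ≤ (A+1)*((k:ℝ)+1)*R := by
      have h6 : A+1+(k:ℝ) ≤ (A+1)*((k:ℝ)+1) := by nlinarith
      exact mul_le_mul_of_nonneg_right h6 hR.le
    nlinarith
  rw [e1]
  nlinarith [mul_le_mul_of_nonneg_left hfac (hvpos k).le]

lemma pc_SerOK (a b : ℝ) (hb : 2 ≤ b) : SerOK (pc a b) := by
  intro R hR
  apply Summable.of_nonneg_of_le (fun k => by positivity) _ (summable_Q |a| R (abs_nonneg a) hR)
  intro k
  have hBpos := ascP_pos (x := b) (by linarith : (0:ℝ) < b) k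
  have hQ := ascP_abs_le a k
  have hfac : (0:ℝ) < (Nat.factorial k : ℝ) := by positivity
  have hnorm : ‖pc a b k‖ =
      |(ascPochhammer ℝ k).eval a| / ((ascPochhammer ℝ k).eval b * (Nat.factorial k : ℝ)) := by
    rw [pc, ascP_ofReal, ascP_ofReal, norm_div, norm_div, div_div, Complex.norm_real,
      Complex.norm_real, Complex.norm_natCast, Real.norm_eq_abs, Real.norm_eq_abs,
      abs_of_pos hBpos]
  rw [hnorm, div_mul_eq_mul_div]
  exact div_le_div₀ (mul_nonneg (ascP_pos (x := |a|+1) (by positivity) k).le (by positivity)) (mul_le_mul_of_nonneg_right hQ (by positivity))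
    (by positivity) (mul_le_mul_of_nonneg_right (ascP_factorial_le hb k) hfac.le)

noncomputable def fK (a b : ℝ) : ℂ → ℂ := fun z => ∑' k : ℕ, pc a b k * z ^ k
noncomputable def fK1 (a b : ℝ) : ℂ → ℂ := fun z => ∑' k : ℕ, ((k:ℂ)+1) * pc a b (k+1) * z ^ k
noncomputable def fK2 (a b : ℝ) : ℂ → ℂ :=
  fun z => ∑' k : ℕ, ((k:ℂ)+1) * (((k:ℂ)+2) * pc a b (k+2)) * z ^ k

lemma kummer_eq (a b : ℝ) (z : ℂ) : kummerPhi a b z = fK a b z := by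
  apply tsum_congr
  intro k
  rw [pc]
  ring

lemma fK_zero (a b : ℝ) : fK a b 0 = 1 := by
  rw [fK]
  rw [tsum_eq_single 0 (fun k hk => by simp [zero_pow hk])]
  simp [pc]

section Derivs

variable {a b : ℝ}

lemma fK_hasDerivAt (hb : 2 ≤ b) (w : ℂ) : HasDerivAt (fK a b) (fK1 a b w) w := by
  have h := (pc_SerOK a b hb).hasDerivAt w
  exact h

lemma fK1_hasDerivAt (hb : 2 ≤ b) (w : ℂ) : HasDerivAt (fK1 a b) (fK2 a b w) w := by
  have h := ((pc_SerOK a b hb).deriv).hasDerivAt w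
  have e : (∑' k : ℕ, ((k:ℂ)+1) * ((((k+1:ℕ):ℂ))+1) * pc a b (k+1+1) * w ^ k) = fK2 a b w := by
    apply tsum_congr
    intro k
    push_cast
    ring
  rw [show fK2 a b w = ∑' k : ℕ, ((k:ℂ)+1) * (((((k+1:ℕ)):ℂ)+1) * pc a b (k+1+1)) * w ^ k from ?_]
  · exact h
  rw [← e]
  apply tsum_congr
  intro k
  ring

lemma fK_ode (hb : 2 ≤ b) (z : ℂ) :
    z * fK2 a b z + ((b:ℂ) - z) * fK1 a b z - (a:ℂ) * fK a b z = 0 := by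
  have S0 : Summable fun k : ℕ => pc a b k * z ^ k := (pc_SerOK a b hb).summable z
  have S1 : Summable fun k : ℕ => ((k:ℂ)+1) * pc a b (k+1) * z ^ k :=
    ((pc_SerOK a b hb).deriv).summable z
  have S3 : Summable fun k : ℕ => (k:ℂ) * pc a b k * z ^ k := by
    apply (((pc_SerOK a b hb).mul_nat).summable z).congr
    intro k; ring
  have S4 : Summable fun k : ℕ => (k:ℂ) * (((k:ℂ)+1) * pc a b (k+1)) * z ^ k := by
    apply ((((pc_SerOK a b hb).deriv).mul_nat).summable z).congr
    intro k; ring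
  -- rewrite z * fK2 a b z
  have hzf2 : z * fK2 a b z = ∑' k : ℕ, (k:ℂ) * (((k:ℂ)+1) * pc a b (k+1)) * z ^ k := by
    rw [fK2, ← tsum_mul_left, Summable.tsum_eq_zero_add S4]
    simp only [Nat.cast_zero, zero_mul, zero_add]
    apply tsum_congr
    intro k
    push_cast
    ring
  have hzf1 : z * fK1 a b z = ∑' k : ℕ, (k:ℂ) * pc a b k * z ^ k := by
    rw [fK1, ← tsum_mul_left, Summable.tsum_eq_zero_add S3]
    simp only [Nat.cast_zero, zero_mul, zero_add]
    apply tsum_congr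
    intro k
    push_cast
    ring
  have hbf1 : (b:ℂ) * fK1 a b z = ∑' k : ℕ, (b:ℂ) * (((k:ℂ)+1) * pc a b (k+1) * z ^ k) := by
    rw [fK1, ← tsum_mul_left]
  have haf : (a:ℂ) * fK a b z = ∑' k : ℕ, (a:ℂ) * (pc a b k * z ^ k) := by
    rw [fK, ← tsum_mul_left]
  have expand : z * fK2 a b z + ((b:ℂ) - z) * fK1 a b z - (a:ℂ) * fK a b z
      = (z * fK2 a b z + (b:ℂ) * fK1 a b z) - (z * fK1 a b z + (a:ℂ) * fK a b z) := by ring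
  rw [expand, hzf2, hzf1, hbf1, haf]
  rw [← Summable.tsum_add S4 (S1.mul_left _), ← Summable.tsum_add S3 (S0.mul_left _),
    ← Summable.tsum_sub (S4.add (S1.mul_left _)) (S3.add (S0.mul_left _))]
  rw [show (0:ℂ) = ∑' (_ : ℕ), (0:ℂ) from (tsum_zero).symm]
  apply tsum_congr
  intro k
  have hrec := pc_rec a b hb k
  linear_combination z ^ k * hrec

end Derivs
end KummerProof

open KummerProof in
theorem kummer_roots_right (a b : ℝ) (hb : 2 ≤ b) (hab : 2 * a < b) (z : ℂ) (hz : z ≠ 0)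
    (h : kummerPhi a b z = 0) : 0 < z.re := by
  by_contra hx
  push_neg at hx
  have hb0 : (0:ℝ) < b := by linarith
  set κ : ℝ := b/2 - a with hκdef
  have hκ : 0 < κ := by rw [hκdef]; linarith
  have hroot : fK a b z = 0 := by rw [← kummer_eq]; exact h
  set g : ℂ → ℂ := fun w => Complex.exp (-w/2) * fK a b w with hgdef
  set g1 : ℂ → ℂ := fun w => Complex.exp (-w/2) * (fK1 a b w - fK a b w / 2) with hg1def
  set g2 : ℂ → ℂ :=
    fun w => Complex.exp (-w/2) * (fK2 a b w - fK1 a b w + fK a b w / 4) with hg2def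
  have hexp : ∀ w : ℂ,
      HasDerivAt (fun w => Complex.exp (-w/2)) (Complex.exp (-w/2) * (-1/2)) w := by
    intro w
    exact ((hasDerivAt_id w).neg.div_const 2).cexp
  have hg : ∀ w, HasDerivAt g (g1 w) w := by
    intro w
    have h1 := (hexp w).mul (fK_hasDerivAt (a := a) hb w)
    refine h1.congr_deriv ?_
    rw [hg1def]
    ring
  have hg1 : ∀ w, HasDerivAt g1 (g2 w) w := by
    intro w
    have hin : HasDerivAt (fun w => fK1 a b w - fK a b w / 2) (fK2 a b w - fK1 a b w / 2) w :=
      (fK1_hasDerivAt (a := a) hb w).sub ((fK_hasDerivAt (a := a) hb w).div_const 2)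
    have h1 := (hexp w).mul hin
    refine h1.congr_deriv ?_
    rw [hg2def]
    ring
  have hgode : ∀ w : ℂ, w * g2 w + (b:ℂ) * g1 w + ((κ:ℂ) - w/4) * g w = 0 := by
    intro w
    have hf := fK_ode (a := a) hb w
    have hκc : (κ:ℂ) = (b:ℂ)/2 - (a:ℂ) := by rw [hκdef]; push_cast; ring
    rw [hκc, hgdef, hg1def, hg2def]
    simp only []
    linear_combination Complex.exp (-w/2) * hf
  set G : ℝ → ℂ := fun t => g ((t:ℂ) * z) with hGdef
  set G1 : ℝ → ℂ := fun t => z * g1 ((t:ℂ) * z) with hG1def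
  set G2 : ℝ → ℂ := fun t => z^2 * g2 ((t:ℂ) * z) with hG2def
  have hG : ∀ t : ℝ, HasDerivAt G (G1 t) t := by
    intro t
    have h1 : HasDerivAt (fun w : ℂ => g (w * z)) (g1 ((t:ℂ)*z) * z) (t:ℂ) :=
      HasDerivAt.comp _ (hg _) (hasDerivAt_mul_const z)
    have h2 := h1.comp_ofReal
    convert h2 using 1
    rw [hG1def]
    ring
  have hG1deriv : ∀ t : ℝ, HasDerivAt G1 (G2 t) t := by
    intro t
    have h1 : HasDerivAt (fun w : ℂ => g1 (w * z)) (g2 ((t:ℂ)*z) * z) (t:ℂ) :=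
      HasDerivAt.comp _ (hg1 _) (hasDerivAt_mul_const z)
    have h2 := h1.comp_ofReal.const_mul z
    refine h2.congr_deriv ?_
    rw [hG2def]
    ring
  have hGode : ∀ t : ℝ,
      (t:ℂ) * G2 t + (b:ℂ) * G1 t + ((κ:ℂ) * z - (t:ℂ) * z^2/4) * G t = 0 := by
    intro t
    have h1 := hgode ((t:ℂ)*z)
    rw [hGdef, hG1def, hG2def]
    simp only []
    linear_combination z * h1
  have hGc : Continuous G := continuous_iff_continuousAt.2 fun t => (hG t).continuousAt
  have hG1c : Continuous G1 := continuous_iff_continuousAt.2 fun t => (hG1deriv t).continuousAt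
  have hrpowc : ∀ p : ℝ, 0 ≤ p → Continuous (fun t : ℝ => t ^ p) := by
    intro p hp
    exact continuous_iff_continuousAt.2
      fun x => Real.continuousAt_rpow_const x p (Or.inr hp)
  have hG0 : G 0 = 1 := by
    rw [hGdef]
    simp only [Complex.ofReal_zero, zero_mul, hgdef]
    simp [fK_zero]
  have hG1root : G 1 = 0 := by
    rw [hGdef]
    simp only [Complex.ofReal_one, one_mul, hgdef]
    simp [hroot]
  set H : ℝ → ℂ := fun t => (t ^ b : ℝ) • (G1 t * (starRingEnd ℂ) (G t)) with hHdef
  set φ : ℝ → ℂ := fun t =>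
      ((t ^ b * Complex.normSq (G1 t) : ℝ) : ℂ)
      + z^2/4 * ((t ^ b * Complex.normSq (G t) : ℝ) : ℂ)
      - (κ:ℂ) * z * ((t ^ (b-1) * Complex.normSq (G t) : ℝ) : ℂ) with hφdef
  have hHderiv : ∀ t ∈ Set.Ioo (0:ℝ) 1, HasDerivAt H (φ t) t := by
    intro t ht
    have ht0 : (0:ℝ) < t := ht.1
    have hr : HasDerivAt (fun s : ℝ => s ^ b) (b * t ^ (b-1)) t :=
      Real.hasDerivAt_rpow_const (Or.inl ht0.ne')
    have hstar : HasDerivAt (fun s => (starRingEnd ℂ) (G s)) ((starRingEnd ℂ) (G1 t)) t :=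
      (hG t).star
    have hP : HasDerivAt (fun s => G1 s * (starRingEnd ℂ) (G s))
        (G2 t * (starRingEnd ℂ) (G t) + G1 t * (starRingEnd ℂ) (G1 t)) t :=
      (hG1deriv t).mul hstar
    have hH2 := hr.smul hP
    refine hH2.congr_deriv ?_
    symm
    have hode := hGode t
    have hcast : ((t ^ b : ℝ) : ℂ) = ((t ^ (b-1) : ℝ) : ℂ) * (t:ℂ) := by
      have htb : (t:ℝ) ^ b = t ^ (b-1) * t := by
        nth_rewrite 1 [show b = (b-1) + 1 by ring]
        rw [Real.rpow_add ht0, Real.rpow_one]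
      rw [htb]
      push_cast
      ring
    rw [hφdef]
    simp only [Complex.real_smul, Complex.ofReal_mul, ← Complex.mul_conj]
    rw [hcast]
    linear_combination (-(((t ^ (b-1) : ℝ) : ℂ)) * (starRingEnd ℂ) (G t)) * hode
  have hHcont : ContinuousOn H (Set.Icc 0 1) :=
    ((hrpowc b hb0.le).smul (hG1c.mul hGc.star)).continuousOn
  have c1 : Continuous fun t : ℝ => ((t ^ b * Complex.normSq (G1 t) : ℝ) : ℂ) :=
    Complex.continuous_ofReal.comp ((hrpowc b hb0.le).mul (Complex.continuous_normSq.comp hG1c))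
  have c2 : Continuous fun t : ℝ => ((t ^ b * Complex.normSq (G t) : ℝ) : ℂ) :=
    Complex.continuous_ofReal.comp ((hrpowc b hb0.le).mul (Complex.continuous_normSq.comp hGc))
  have c3 : Continuous fun t : ℝ => ((t ^ (b-1) * Complex.normSq (G t) : ℝ) : ℂ) :=
    Complex.continuous_ofReal.comp
      ((hrpowc (b-1) (by linarith)).mul (Complex.continuous_normSq.comp hGc))
  have hφcont : Continuous φ := (c1.add (continuous_const.mul c2)).sub (continuous_const.mul c3)
  have hFTC := intervalIntegral.integral_eq_sub_of_hasDerivAt_of_le (by norm_num : (0:ℝ) ≤ 1)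
    hHcont hHderiv (hφcont.intervalIntegrable 0 1)
  have hH1 : H 1 = 0 := by
    rw [hHdef]
    simp [hG1root]
  have hH0 : H 0 = 0 := by
    rw [hHdef]
    simp [Real.zero_rpow hb0.ne']
  set B1 : ℝ := ∫ t in (0:ℝ)..1, t ^ b * Complex.normSq (G1 t) with hB1
  set C1 : ℝ := ∫ t in (0:ℝ)..1, t ^ b * Complex.normSq (G t) with hC1
  set A1 : ℝ := ∫ t in (0:ℝ)..1, t ^ (b-1) * Complex.normSq (G t) with hA1
  have hsplit : (∫ t in (0:ℝ)..1, φ t) = (B1:ℂ) + z^2/4 * (C1:ℂ) - (κ:ℂ)*z*(A1:ℂ) := by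
    rw [hφdef]
    rw [intervalIntegral.integral_sub
        ((c1.intervalIntegrable 0 1).add ((c2.intervalIntegrable 0 1).const_mul _))
        ((c3.intervalIntegrable 0 1).const_mul _),
      intervalIntegral.integral_add (c1.intervalIntegrable 0 1)
        ((c2.intervalIntegrable 0 1).const_mul _),
      intervalIntegral.integral_const_mul, intervalIntegral.integral_const_mul]
    have hcoe : ∀ f : ℝ → ℝ, (∫ t in (0:ℝ)..1, ((f t : ℝ) : ℂ)) = ((∫ t in (0:ℝ)..1, f t : ℝ) : ℂ) :=
      fun f => RCLike.intervalIntegral_ofReal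
    rw [hcoe, hcoe, hcoe]
  have hiden : (B1:ℂ) + z^2/4*(C1:ℂ) - (κ:ℂ)*z*(A1:ℂ) = 0 := by
    rw [← hsplit, hFTC, hH1, hH0, sub_zero]
  have hB1nonneg : 0 ≤ B1 :=
    intervalIntegral.integral_nonneg (by norm_num)
      (fun u hu => mul_nonneg (Real.rpow_nonneg hu.1 _) (Complex.normSq_nonneg _))
  have hδex : ∃ δ > 0, ∀ s : ℝ, |s| < δ → 0 < Complex.normSq (G s) := by
    have hcont : ContinuousAt (fun s => Complex.normSq (G s)) 0 :=
      (Complex.continuous_normSq.comp hGc).continuousAt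
    obtain ⟨δ, hδpos, hδ⟩ := Metric.continuousAt_iff.1 hcont (1/2) (by norm_num)
    refine ⟨δ, hδpos, fun s hs => ?_⟩
    have h1 := hδ (x := s) (by simpa [Real.dist_eq] using hs)
    rw [hG0] at h1
    simp only [Complex.normSq_one] at h1
    rw [Real.dist_eq] at h1
    have := abs_lt.1 h1
    linarith [this.1]
  have hposint : ∀ p : ℝ, 0 ≤ p →
      Continuous (fun t : ℝ => t ^ p * Complex.normSq (G t)) →
      0 < ∫ t in (0:ℝ)..1, t ^ p * Complex.normSq (G t) := by
    intro p hp hcontp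
    obtain ⟨δ, hδpos, hδ⟩ := hδex
    rw [intervalIntegral.integral_pos_iff_support_of_nonneg_ae']
    · refine ⟨one_pos, ?_⟩
      set m := min δ 1 with hm
      have hm0 : 0 < m := lt_min hδpos one_pos
      have hsub : Set.Ioo 0 m ⊆
          (Function.support fun t => t ^ p * Complex.normSq (G t)) ∩ Set.Ioc 0 1 := by
        intro s hs
        constructor
        · apply Function.mem_support.2
          have h1 : 0 < s ^ p := Real.rpow_pos_of_pos hs.1 p
          have h2 : 0 < Complex.normSq (G s) := by
            apply hδ
            rw [abs_of_pos hs.1]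
            exact lt_of_lt_of_le hs.2 (min_le_left _ _)
          positivity
        · exact ⟨hs.1, le_trans hs.2.le (min_le_right _ _)⟩
      calc (0:ENNReal) < MeasureTheory.volume (Set.Ioo 0 m) := by
            rw [Real.volume_Ioo]
            simp [hm0]
        _ ≤ _ := MeasureTheory.measure_mono hsub
    · rw [Set.uIoc_of_le (by norm_num : (0:ℝ) ≤ 1)]
      refine MeasureTheory.ae_restrict_of_forall_mem measurableSet_Ioc ?_
      intro s hs
      exact mul_nonneg (Real.rpow_nonneg hs.1.le _) (Complex.normSq_nonneg _)
    · exact hcontp.intervalIntegrable 0 1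
  have hC1pos : 0 < C1 :=
    hposint b hb0.le ((hrpowc b hb0.le).mul (Complex.continuous_normSq.comp hGc))
  have hA1pos : 0 < A1 :=
    hposint (b-1) (by linarith) ((hrpowc (b-1) (by linarith)).mul
      (Complex.continuous_normSq.comp hGc))
  have J : ((4*B1 : ℝ):ℂ) + z^2 * ((C1:ℝ):ℂ) = ((4*(κ*A1) : ℝ):ℂ) * z := by
    push_cast
    linear_combination 4*hiden
  rw [Complex.ext_iff] at J
  obtain ⟨hre, him⟩ := J
  simp only [pow_two, Complex.add_re, Complex.add_im, Complex.mul_re, Complex.mul_im,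
    Complex.ofReal_re, Complex.ofReal_im, mul_zero, zero_mul, sub_zero, add_zero,
    zero_add, zero_sub, neg_zero] at hre him
  have hz0 : z.re ≠ 0 ∨ z.im ≠ 0 := by
    by_contra hc
    push_neg at hc
    exact hz (Complex.ext hc.1 hc.2)
  rcases eq_or_ne z.im 0 with him0 | him0
  · have hzre : z.re ≠ 0 := by
      rcases hz0 with h' | h'
      · exact h'
      · exact absurd him0 h'
    have hzre' : z.re < 0 := lt_of_le_of_ne hx hzre
    rw [him0] at hre
    simp only [mul_zero, sub_zero] at hre
    have h7 : 0 < 4*(κ*A1) := by positivity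
    have h8 : 4*(κ*A1)*z.re < 0 := mul_neg_of_pos_of_neg h7 hzre'
    have h9 : 0 < z.re*z.re*C1 := mul_pos (mul_pos_of_neg_of_neg hzre' hzre') hC1pos
    nlinarith [hre, h8, h9, hB1nonneg]
  · have h10 : z.im * (2*z.re*C1 - 4*(κ*A1)) = 0 := by linear_combination him
    have h11 : 2*z.re*C1 - 4*(κ*A1) = 0 := by
      rcases mul_eq_zero.1 h10 with h' | h'
      · exact absurd h' him0
      · exact h'
    have h12 : 0 < 4*(κ*A1) := by positivity
    have h13 : 2*z.re*C1 ≤ 0 := by nlinarith [mul_nonneg (neg_nonneg.2 hx) hC1pos.le]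
    linarith
end

section
/- Let a, b ∈ ℝ with b ≥ 2 and b < 2a. Then every root z ∈ ℂ, z ≠ 0, of the Kummer function Φ(a, b, ·) satisfies Re(z) < 0. -/
open Complex

noncomputable def kgam (a b : ℝ) (k : ℕ) : ℝ :=
  (ascPochhammer ℝ k).eval a / ((ascPochhammer ℝ k).eval b * (Nat.factorial k))

lemma kgam_pos {a b : ℝ} (ha : 0 < a) (hb : 0 < b) (k : ℕ) : 0 < kgam a b k := by
  have h1 := ascPochhammer_pos k a ha
  have h2 := ascPochhammer_pos k b hb
  have h3 : (0:ℝ) < (Nat.factorial k : ℝ) := by positivity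
  unfold kgam
  positivity

lemma kgam_zero (a b : ℝ) : kgam a b 0 = 1 := by simp [kgam]

lemma kgam_rec {a b : ℝ} (ha : 0 < a) (hb : 0 < b) (k : ℕ) :
    kgam a b (k + 1) * (((k:ℝ) + 1) * (b + k)) = (a + k) * kgam a b k := by
  have h1 := ascPochhammer_succ_eval (S := ℝ) k a
  have h2 := ascPochhammer_succ_eval (S := ℝ) k b
  have hbne : (ascPochhammer ℝ k).eval b ≠ 0 := ne_of_gt (ascPochhammer_pos k b hb)
  have hfac : ((k+1).factorial : ℝ) ≠ 0 := by positivity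
  have hfac' : ((k).factorial : ℝ) ≠ 0 := by positivity
  have hbk : b + (k:ℝ) ≠ 0 := by positivity
  unfold kgam
  rw [h1, h2, Nat.factorial_succ]
  push_cast
  field_simp

/-- master summability lemma -/
lemma kgam_summable {a b : ℝ} (ha : 0 < a) (hb : 0 < b) {R : ℝ} (hR : 0 < R) :
    Summable (fun k : ℕ => kgam a b k * ((k:ℝ) + 5)^3 * R^k) := by
  set f := fun k : ℕ => kgam a b k * ((k:ℝ) + 5)^3 * R^k with hf
  have hfpos : ∀ k, 0 < f k := fun k => by
    have := kgam_pos ha hb k; positivity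
  apply summable_of_ratio_norm_eventually_le (r := 1/2) (by norm_num)
  rw [Filter.eventually_atTop]
  refine ⟨Nat.ceil (max (max (2*a) (8*R)) 1), fun k hk => ?_⟩
  have hk' : max (max (2*a) (8*R)) 1 ≤ (k:ℝ) := le_trans (Nat.le_ceil _) (by exact_mod_cast hk)
  have hka : 2*a ≤ (k:ℝ) := le_trans (le_max_of_le_left (le_max_left _ _)) hk'
  have hkR : 8*R ≤ (k:ℝ) := le_trans (le_max_of_le_left (le_max_right _ _)) hk'
  have hk1 : 1 ≤ (k:ℝ) := le_trans (le_max_right _ _) hk'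
  rw [Real.norm_eq_abs, Real.norm_eq_abs, abs_of_pos (hfpos _), abs_of_pos (hfpos _)]
  -- f (k+1) = (a+k)/( (k+1)(b+k) ) * ((k+6)/(k+5))^3 * R * f k
  have hrec := kgam_rec ha hb k
  have hd : ((k:ℝ)+1) * (b+k) > 0 := by positivity
  have hg1 : kgam a b (k+1) = (a + k) * kgam a b k / (((k:ℝ) + 1) * (b + k)) := by
    field_simp
    linarith [hrec]
  have hgpos := kgam_pos ha hb k
  have hRk : (0:ℝ) < R^k := by positivity
  -- goal : kgam a b (k+1) * ((k+1)+5)^3 * R^(k+1) ≤ 1/2 * (kgam a b k * (k+5)^3 * R^k)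
  simp only [hf]
  rw [hg1]
  rw [pow_succ R k]
  rw [div_mul_eq_mul_div, div_mul_eq_mul_div, div_mul_eq_mul_div, div_le_iff₀ hd]
  push_cast
  set K := (k:ℝ) with hK
  have hK0 : 0 ≤ K := by linarith
  have h6 : (K+1+5)^3 ≤ 2*(K+5)^3 := by nlinarith [hk1, sq_nonneg K]
  have key : 2*R*((a+K)*(K+1+5)^3) ≤ (K+1)*(b+K)*(K+5)^3 := by
    have e1 : (a+K)*(K+1+5)^3 ≤ (3/2*K)*(2*(K+5)^3) :=
      mul_le_mul (by linarith) h6 (by positivity) (by linarith)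
    calc 2*R*((a+K)*(K+1+5)^3) ≤ 2*R*((3/2*K)*(2*(K+5)^3)) := by
          exact mul_le_mul_of_nonneg_left e1 (by positivity)
      _ = (6*R*K)*(K+5)^3 := by ring
      _ ≤ (K*K)*(K+5)^3 := by
          refine mul_le_mul_of_nonneg_right ?_ (by positivity)
          nlinarith [hkR, hk1]
      _ ≤ ((K+1)*(b+K))*(K+5)^3 := by
          refine mul_le_mul_of_nonneg_right ?_ (by positivity)
          nlinarith [hk1]
  nlinarith [mul_le_mul_of_nonneg_right key (le_of_lt (mul_pos hgpos hRk))]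

section P2
variable {a b : ℝ} {z : ℂ}

/-- generic power-series-in-real-variable function -/
noncomputable def WS (ρ : ℕ → ℂ) (t : ℝ) : ℂ := ∑' k, ρ k * ((t^k : ℝ) : ℂ)

noncomputable def kr0 (a b : ℝ) (z : ℂ) (k : ℕ) : ℂ := ((kgam a b k : ℝ) : ℂ) * z^k
noncomputable def kr1 (a b : ℝ) (z : ℂ) (k : ℕ) : ℂ :=
  ((kgam a b (k+1) * ((k:ℝ)+1) : ℝ) : ℂ) * z^(k+1)
noncomputable def kr2 (a b : ℝ) (z : ℂ) (k : ℕ) : ℂ :=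
  ((kgam a b (k+2) * ((k:ℝ)+2) * ((k:ℝ)+1) : ℝ) : ℂ) * z^(k+2)

lemma WS_hasDerivAt (ρ : ℕ → ℂ) (h : Summable (fun k => ‖ρ k‖ * ((k:ℝ)+1) * 2^k))
    {t : ℝ} (ht : t ∈ Metric.ball (0:ℝ) 2) :
    HasDerivAt (WS ρ) (∑' k, ρ k * (((k : ℝ) * t^(k-1) : ℝ) : ℂ)) t := by
  refine hasDerivAt_tsum_of_isPreconnected h Metric.isOpen_ball
    (convex_ball (0:ℝ) 2).isPreconnected
    (g := fun k s => ρ k * ((s^k : ℝ) : ℂ))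
    (g' := fun k s => ρ k * (((k : ℝ) * s^(k-1) : ℝ) : ℂ))
    (fun k y _ => ?_) (fun k y hy => ?_) (Metric.mem_ball_self (by norm_num)) ?_ ht
  · have h1 : HasDerivAt (fun s : ℝ => s^k) ((k:ℝ) * y^(k-1)) y := hasDerivAt_pow k y
    exact h1.ofReal_comp.const_mul (ρ k)
  · have hy2 : |y| < 2 := by simpa [Real.dist_eq] using hy
    rw [norm_mul]
    have h2 : ‖(((k : ℝ) * y^(k-1) : ℝ) : ℂ)‖ = (k:ℝ) * |y^(k-1)| := by
      rw [Complex.norm_real, Real.norm_eq_abs, abs_mul, Nat.abs_cast]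
    rw [h2, _root_.abs_pow]
    have h3 : |y|^(k-1) ≤ 2^k := by
      calc |y|^(k-1) ≤ 2^(k-1) := pow_le_pow_left₀ (abs_nonneg y) hy2.le _
        _ ≤ 2^k := pow_le_pow_right₀ (by norm_num) (Nat.sub_le k 1)
    calc ‖ρ k‖ * ((k:ℝ) * |y|^(k-1)) ≤ ‖ρ k‖ * (((k:ℝ)+1) * 2^k) := by
          refine mul_le_mul_of_nonneg_left ?_ (norm_nonneg _)
          exact mul_le_mul (by linarith) h3 (by positivity) (by positivity)
      _ = ‖ρ k‖ * ((k:ℝ)+1) * 2^k := by ring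
  · refine summable_of_ne_finset_zero (s := {0}) (fun k hk => ?_)
    have : k ≠ 0 := by simpa using hk
    simp [zero_pow this]

lemma WS_summable (ρ : ℕ → ℂ) (h : Summable (fun k => ‖ρ k‖ * ((k:ℝ)+1) * 2^k))
    {t : ℝ} (ht : |t| ≤ 2) : Summable (fun k => ρ k * ((t^k : ℝ) : ℂ)) := by
  refine Summable.of_norm_bounded h (fun k => ?_)
  rw [norm_mul, Complex.norm_real, Real.norm_eq_abs, _root_.abs_pow]
  calc ‖ρ k‖ * |t|^k ≤ ‖ρ k‖ * 2^k :=
        mul_le_mul_of_nonneg_left (pow_le_pow_left₀ (abs_nonneg t) ht k) (norm_nonneg _)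
    _ ≤ ‖ρ k‖ * ((k:ℝ)+1) * 2^k := by
        have h1 : (0:ℝ) ≤ ‖ρ k‖ * ((k:ℝ) * 2^k) := by positivity
        nlinarith [h1]

lemma pow_mul_two_le (w : ℝ) (hw : 0 ≤ w) (k : ℕ) : w^k * 2^k ≤ (2*(w+1))^k := by
  calc w^k * 2^k = (w*2)^k := by rw [mul_pow]
    _ ≤ ((w+1)*2)^k := pow_le_pow_left₀ (by positivity) (by linarith) k
    _ = (2*(w+1))^k := by ring_nf

lemma summable_norm_kr0 (ha : 0 < a) (hb : 0 < b) :
    Summable (fun k => ‖kr0 a b z k‖ * ((k:ℝ)+1) * 2^k) := by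
  have hm := kgam_summable (a := a) (b := b) ha hb (R := 2*(‖z‖+1)) (by positivity)
  refine Summable.of_nonneg_of_le (fun k => by positivity) (fun k => ?_) hm
  have hg := kgam_pos ha hb k
  rw [kr0, norm_mul, Complex.norm_real, Real.norm_eq_abs, norm_pow, abs_of_pos hg]
  calc kgam a b k * ‖z‖^k * ((k:ℝ)+1) * 2^k
      = kgam a b k * (((k:ℝ)+1) * (‖z‖^k * 2^k)) := by ring
    _ ≤ kgam a b k * (((k:ℝ)+5)^3 * (2*(‖z‖+1))^k) := by
        refine mul_le_mul_of_nonneg_left ?_ hg.le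
        refine mul_le_mul ?_ (pow_mul_two_le _ (norm_nonneg z) k) (by positivity) (by positivity)
        have hk0 : (0:ℝ) ≤ (k:ℝ) := Nat.cast_nonneg k
        nlinarith [hk0, sq_nonneg (k:ℝ), mul_nonneg hk0 (mul_nonneg hk0 hk0)]
    _ = kgam a b k * ((k:ℝ)+5)^3 * (2*(‖z‖+1))^k := by ring

lemma summable_norm_kr1 (ha : 0 < a) (hb : 0 < b) :
    Summable (fun k => ‖kr1 a b z k‖ * ((k:ℝ)+1) * 2^k) := by
  have hm := kgam_summable (a := a) (b := b) ha hb (R := 2*(‖z‖+1)) (by positivity)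
  have hm1 := (summable_nat_add_iff 1).2 hm
  refine Summable.of_nonneg_of_le (fun k => by positivity) (fun k => ?_) hm1
  have hg := kgam_pos ha hb (k+1)
  have hz1 : (0:ℝ) ≤ ‖z‖ := norm_nonneg z
  rw [kr1, norm_mul, Complex.norm_real, Real.norm_eq_abs, norm_pow]
  rw [abs_of_pos (by positivity)]
  push_cast
  calc kgam a b (k+1) * ((k:ℝ)+1) * ‖z‖^(k+1) * ((k:ℝ)+1) * 2^k
      = kgam a b (k+1) * ((((k:ℝ)+1)*((k:ℝ)+1)*2⁻¹) * (‖z‖^(k+1) * 2^(k+1))) := by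
        rw [pow_succ]; ring
    _ ≤ kgam a b (k+1) * ((((k:ℝ)+1)+5)^3 * (2*(‖z‖+1))^(k+1)) := by
        refine mul_le_mul_of_nonneg_left ?_ hg.le
        refine mul_le_mul ?_ (pow_mul_two_le _ hz1 (k+1)) (by positivity) (by positivity)
        have hk0 : (0:ℝ) ≤ (k:ℝ) := Nat.cast_nonneg k
        nlinarith [hk0, sq_nonneg (k:ℝ), mul_nonneg hk0 (mul_nonneg hk0 hk0)]
    _ = kgam a b (k+1) * (((k:ℝ)+1)+5)^3 * (2*(‖z‖+1))^(k+1) := by ring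

lemma summable_norm_kr2 (ha : 0 < a) (hb : 0 < b) :
    Summable (fun k => ‖kr2 a b z k‖ * ((k:ℝ)+1) * 2^k) := by
  have hm := kgam_summable (a := a) (b := b) ha hb (R := 2*(‖z‖+1)) (by positivity)
  have hm2 := (summable_nat_add_iff 2).2 hm
  refine Summable.of_nonneg_of_le (fun k => by positivity) (fun k => ?_) hm2
  have hg := kgam_pos ha hb (k+2)
  have hz1 : (0:ℝ) ≤ ‖z‖ := norm_nonneg z
  rw [kr2, norm_mul, Complex.norm_real, Real.norm_eq_abs, norm_pow]
  rw [abs_of_pos (by positivity)]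
  push_cast
  calc kgam a b (k+2) * ((k:ℝ)+2) * ((k:ℝ)+1) * ‖z‖^(k+2) * ((k:ℝ)+1) * 2^k
      = kgam a b (k+2) * ((((k:ℝ)+2)*((k:ℝ)+1)*((k:ℝ)+1)*4⁻¹) * (‖z‖^(k+2) * 2^(k+2))) := by
        rw [pow_succ, pow_succ]; ring
    _ ≤ kgam a b (k+2) * ((((k:ℝ)+2)+5)^3 * (2*(‖z‖+1))^(k+2)) := by
        refine mul_le_mul_of_nonneg_left ?_ hg.le
        refine mul_le_mul ?_ (pow_mul_two_le _ hz1 (k+2)) (by positivity) (by positivity)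
        have hk0 : (0:ℝ) ≤ (k:ℝ) := Nat.cast_nonneg k
        nlinarith [hk0, sq_nonneg (k:ℝ), mul_nonneg hk0 (mul_nonneg hk0 hk0)]
    _ = kgam a b (k+2) * (((k:ℝ)+2)+5)^3 * (2*(‖z‖+1))^(k+2) := by ring

end P2

section P3
variable {a b : ℝ} {z : ℂ}

lemma WS_summable_k (ρ : ℕ → ℂ) (h : Summable (fun k => ‖ρ k‖ * ((k:ℝ)+1) * 2^k))
    {t : ℝ} (ht : |t| ≤ 2) : Summable (fun k => ρ k * ((k:ℝ):ℂ) * ((t^k : ℝ) : ℂ)) := by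
  refine Summable.of_norm_bounded h (fun k => ?_)
  rw [norm_mul, norm_mul, Complex.norm_real, Complex.norm_real, Real.norm_eq_abs,
    Real.norm_eq_abs, _root_.abs_pow, Nat.abs_cast]
  calc ‖ρ k‖ * (k:ℝ) * |t|^k ≤ (‖ρ k‖ * ((k:ℝ)+1)) * 2^k := by
        refine mul_le_mul ?_ (pow_le_pow_left₀ (abs_nonneg t) ht k) (by positivity) (by positivity)
        refine mul_le_mul_of_nonneg_left (by linarith) (norm_nonneg _)
    _ = ‖ρ k‖ * ((k:ℝ)+1) * 2^k := by ring

lemma WS_deriv_summable (ρ : ℕ → ℂ) (h : Summable (fun k => ‖ρ k‖ * ((k:ℝ)+1) * 2^k))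
    {t : ℝ} (ht : |t| ≤ 2) :
    Summable (fun k => ρ k * (((k:ℝ) * t^(k-1) : ℝ) : ℂ)) := by
  refine Summable.of_norm_bounded h (fun k => ?_)
  rw [norm_mul, Complex.norm_real, Real.norm_eq_abs, abs_mul, Nat.abs_cast, _root_.abs_pow]
  have h3 : |t|^(k-1) ≤ 2^k := by
    calc |t|^(k-1) ≤ 2^(k-1) := pow_le_pow_left₀ (abs_nonneg t) ht _
      _ ≤ 2^k := pow_le_pow_right₀ (by norm_num) (Nat.sub_le k 1)
  calc ‖ρ k‖ * ((k:ℝ) * |t|^(k-1)) ≤ ‖ρ k‖ * (((k:ℝ)+1) * 2^k) := by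
        refine mul_le_mul_of_nonneg_left ?_ (norm_nonneg _)
        exact mul_le_mul (by linarith) h3 (by positivity) (by positivity)
    _ = ‖ρ k‖ * ((k:ℝ)+1) * 2^k := by ring

lemma hasDerivAt_W0 (ha : 0 < a) (hb : 0 < b) {t : ℝ} (ht : t ∈ Metric.ball (0:ℝ) 2) :
    HasDerivAt (WS (kr0 a b z)) (WS (kr1 a b z) t) t := by
  have h := WS_hasDerivAt (kr0 a b z) (summable_norm_kr0 ha hb) ht
  have ht2 : |t| ≤ 2 := le_of_lt (by simpa [Real.dist_eq] using ht)
  have hs := WS_deriv_summable _ (summable_norm_kr0 (z := z) ha hb) ht2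
  convert h using 1
  rw [WS, Summable.tsum_eq_zero_add hs]
  simp only [Nat.cast_zero, zero_mul, ofReal_zero, mul_zero, zero_add]
  refine tsum_congr (fun k => ?_)
  rw [kr0, kr1, Nat.succ_sub_one]
  push_cast
  ring

lemma hasDerivAt_W1 (ha : 0 < a) (hb : 0 < b) {t : ℝ} (ht : t ∈ Metric.ball (0:ℝ) 2) :
    HasDerivAt (WS (kr1 a b z)) (WS (kr2 a b z) t) t := by
  have h := WS_hasDerivAt (kr1 a b z) (summable_norm_kr1 ha hb) ht
  have ht2 : |t| ≤ 2 := le_of_lt (by simpa [Real.dist_eq] using ht)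
  have hs := WS_deriv_summable _ (summable_norm_kr1 (z := z) ha hb) ht2
  convert h using 1
  rw [WS, Summable.tsum_eq_zero_add hs]
  simp only [Nat.cast_zero, zero_mul, ofReal_zero, mul_zero, zero_add]
  refine tsum_congr (fun k => ?_)
  rw [kr1, kr2, Nat.succ_sub_one]
  push_cast
  ring

lemma continuousAt_W2 (ha : 0 < a) (hb : 0 < b) {t : ℝ} (ht : t ∈ Metric.ball (0:ℝ) 2) :
    ContinuousAt (WS (kr2 a b z)) t :=
  (WS_hasDerivAt (kr2 a b z) (summable_norm_kr2 ha hb) ht).continuousAt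

lemma asc_cast (r : ℝ) (k : ℕ) :
    (((ascPochhammer ℝ k).eval r : ℝ) : ℂ) = (ascPochhammer ℂ k).eval (r : ℂ) := by
  rw [← ascPochhammer_map (algebraMap ℝ ℂ) k, Polynomial.eval_map]
  exact (Polynomial.eval₂_at_apply (algebraMap ℝ ℂ) r).symm

lemma W0_zero (ha : 0 < a) (hb : 0 < b) : WS (kr0 a b z) 0 = 1 := by
  have hs := WS_summable (kr0 a b z) (summable_norm_kr0 ha hb) (t := 0) (by norm_num)
  rw [WS, Summable.tsum_eq_zero_add hs]
  have h1 : ∀ k : ℕ, kr0 a b z (k+1) * (((0:ℝ)^(k+1) : ℝ) : ℂ) = 0 := by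
    intro k; simp [zero_pow (Nat.succ_ne_zero k)]
  simp only [h1, tsum_zero, add_zero, pow_zero, ofReal_one, mul_one, kr0, kgam_zero]
  simp

lemma W0_one (ha : 0 < a) (hb : 0 < b) : WS (kr0 a b z) 1 = kummerPhi a b z := by
  rw [WS, kummerPhi]
  refine tsum_congr (fun k => ?_)
  have hpb : (ascPochhammer ℝ k).eval b ≠ 0 := ne_of_gt (ascPochhammer_pos k b hb)
  rw [kr0, kgam, one_pow, ofReal_one, mul_one]
  push_cast
  rw [asc_cast, asc_cast]
  ring

lemma kummer_ode_s14 (ha : 0 < a) (hb : 0 < b) {t : ℝ} (ht : |t| ≤ 2) :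
    (t:ℂ) * WS (kr2 a b z) t + ((b:ℂ) - z*(t:ℂ)) * WS (kr1 a b z) t
      - (a:ℂ)*z*WS (kr0 a b z) t = 0 := by
  have h0 := summable_norm_kr0 (z := z) ha hb
  have h1 := summable_norm_kr1 (z := z) ha hb
  have h2 := summable_norm_kr2 (z := z) ha hb
  have s0 := WS_summable _ h0 ht
  have s1 := WS_summable _ h1 ht
  have s0k := WS_summable_k _ h0 ht
  have s1k := WS_summable_k _ h1 ht
  have c1 : (t:ℂ) * WS (kr2 a b z) t
      = ∑' k, kr1 a b z k * ((k:ℝ):ℂ) * ((t^k : ℝ) : ℂ) := by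
    rw [Summable.tsum_eq_zero_add s1k]
    simp only [Nat.cast_zero, ofReal_zero, mul_zero, zero_mul, zero_add]
    rw [WS, ← tsum_mul_left]
    refine (tsum_congr (fun k => ?_)).symm
    rw [kr1, kr2]
    push_cast
    ring
  have c2 : (t:ℂ) * WS (kr1 a b z) t
      = ∑' k, kr0 a b z k * ((k:ℝ):ℂ) * ((t^k : ℝ) : ℂ) := by
    rw [Summable.tsum_eq_zero_add s0k]
    simp only [Nat.cast_zero, ofReal_zero, mul_zero, zero_mul, zero_add]
    rw [WS, ← tsum_mul_left]
    refine (tsum_congr (fun k => ?_)).symm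
    rw [kr0, kr1]
    push_cast
    ring
  have e1 : (t:ℂ) * WS (kr2 a b z) t + ((b:ℂ) - z*(t:ℂ)) * WS (kr1 a b z) t
      - (a:ℂ)*z*WS (kr0 a b z) t
      = ((t:ℂ) * WS (kr2 a b z) t) + (b:ℂ) * WS (kr1 a b z) t
        - z * ((t:ℂ) * WS (kr1 a b z) t) - ((a:ℂ)*z) * WS (kr0 a b z) t := by ring
  rw [e1, c1, c2, WS, WS, ← tsum_mul_left, ← tsum_mul_left, ← tsum_mul_left]
  rw [← Summable.tsum_add s1k (s1.mul_left _),
    ← Summable.tsum_sub ((s1k.add (s1.mul_left _))) (s0k.mul_left z),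
    ← Summable.tsum_sub (((s1k.add (s1.mul_left _))).sub (s0k.mul_left z)) (s0.mul_left _)]
  rw [show (0:ℂ) = ∑' (_ : ℕ), (0:ℂ) from tsum_zero.symm]
  refine tsum_congr (fun k => ?_)
  have hr := kgam_rec ha hb k
  have hrC : ((kgam a b (k+1) * (((k:ℝ)+1)*(b+(k:ℝ))) : ℝ) : ℂ)
      = (((a+(k:ℝ)) * kgam a b k : ℝ) : ℂ) := by exact_mod_cast congrArg (fun r : ℝ => (r:ℂ)) hr
  rw [kr0, kr1]
  push_cast at hrC ⊢
  linear_combination (z^(k+1) * ((t:ℝ) : ℂ)^k) * hrC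
end P3

set_option maxHeartbeats 1000000 in
theorem kummer_roots_left (a b : ℝ) (hb : 2 ≤ b) (hab : b < 2 * a) (z : ℂ) (hz : z ≠ 0)
    (h : kummerPhi a b z = 0) : z.re < 0 := by
  by_contra hcon
  push_neg at hcon
  have ha : 0 < a := by linarith
  have hb0 : 0 < b := by linarith
  have hb1 : 1 ≤ b := by linarith
  set u := WS (kr0 a b z) with hu_def
  set u1 := WS (kr1 a b z) with hu1_def
  set u2 := WS (kr2 a b z) with hu2_def
  have hball : ∀ t ∈ Set.uIcc (0:ℝ) 1, t ∈ Metric.ball (0:ℝ) 2 := by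
    intro t ht
    rw [Set.uIcc_of_le zero_le_one] at ht
    rw [Metric.mem_ball, Real.dist_eq, sub_zero, abs_lt]
    constructor <;> [linarith [ht.1]; linarith [ht.2]]
  have habs : ∀ t ∈ Set.uIcc (0:ℝ) 1, |t| ≤ 2 := fun t ht =>
    le_of_lt (by simpa [Real.dist_eq] using hball t ht)
  have hu1eq : u 1 = 0 := by rw [hu_def, W0_one ha hb0, h]
  have hu0 : u 0 = 1 := W0_zero ha hb0
  have hdu : ∀ t ∈ Set.uIcc (0:ℝ) 1, HasDerivAt u (u1 t) t := fun t ht =>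
    hasDerivAt_W0 ha hb0 (hball t ht)
  have hdu1 : ∀ t ∈ Set.uIcc (0:ℝ) 1, HasDerivAt u1 (u2 t) t := fun t ht =>
    hasDerivAt_W1 ha hb0 (hball t ht)
  have hcu : ContinuousOn u (Set.uIcc (0:ℝ) 1) := fun t ht =>
    ((hdu t ht).continuousAt).continuousWithinAt
  have hcu1 : ContinuousOn u1 (Set.uIcc (0:ℝ) 1) := fun t ht =>
    ((hdu1 t ht).continuousAt).continuousWithinAt
  have hcu2 : ContinuousOn u2 (Set.uIcc (0:ℝ) 1) := fun t ht =>
    (continuousAt_W2 ha hb0 (hball t ht)).continuousWithinAt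
  have hcb : Continuous (fun t : ℝ => t ^ (b:ℝ)) :=
    continuous_iff_continuousAt.2 (fun t => Real.continuousAt_rpow_const t b (Or.inr hb0.le))
  have hcb1 : Continuous (fun t : ℝ => t ^ (b-1:ℝ)) :=
    continuous_iff_continuousAt.2 (fun t =>
      Real.continuousAt_rpow_const t (b-1) (Or.inr (by linarith)))
  set F1 : ℝ → ℝ := fun t => t^(b:ℝ) * ((u1 t).re^2 + (u1 t).im^2) with hF1def
  set F2 : ℝ → ℝ := fun t => t^(b-1:ℝ) * ((u t).re^2 + (u t).im^2) with hF2def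
  set F3 : ℝ → ℝ := fun t => t^(b:ℝ) * ((u1 t).re*(u t).re + (u1 t).im*(u t).im) with hF3def
  set F4 : ℝ → ℝ := fun t => t^(b:ℝ) * ((u1 t).im*(u t).re - (u1 t).re*(u t).im) with hF4def
  have hcur : ContinuousOn (fun t => (u t).re) (Set.uIcc (0:ℝ) 1) :=
    Complex.continuous_re.comp_continuousOn hcu
  have hcui : ContinuousOn (fun t => (u t).im) (Set.uIcc (0:ℝ) 1) :=
    Complex.continuous_im.comp_continuousOn hcu
  have hcu1r : ContinuousOn (fun t => (u1 t).re) (Set.uIcc (0:ℝ) 1) :=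
    Complex.continuous_re.comp_continuousOn hcu1
  have hcu1i : ContinuousOn (fun t => (u1 t).im) (Set.uIcc (0:ℝ) 1) :=
    Complex.continuous_im.comp_continuousOn hcu1
  have hcF1 : ContinuousOn F1 (Set.uIcc (0:ℝ) 1) :=
    (hcb.continuousOn).mul (((hcu1r.pow 2)).add ((hcu1i.pow 2)))
  have hcF2 : ContinuousOn F2 (Set.uIcc (0:ℝ) 1) :=
    (hcb1.continuousOn).mul (((hcur.pow 2)).add ((hcui.pow 2)))
  have hcF3 : ContinuousOn F3 (Set.uIcc (0:ℝ) 1) :=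
    (hcb.continuousOn).mul (((hcu1r.mul hcur)).add ((hcu1i.mul hcui)))
  have hcF4 : ContinuousOn F4 (Set.uIcc (0:ℝ) 1) :=
    (hcb.continuousOn).mul (((hcu1i.mul hcur)).sub ((hcu1r.mul hcui)))
  have hiF1 : IntervalIntegrable F1 MeasureTheory.volume 0 1 := hcF1.intervalIntegrable
  have hiF2 : IntervalIntegrable F2 MeasureTheory.volume 0 1 := hcF2.intervalIntegrable
  have hiF3 : IntervalIntegrable F3 MeasureTheory.volume 0 1 := hcF3.intervalIntegrable
  have hiF4 : IntervalIntegrable F4 MeasureTheory.volume 0 1 := hcF4.intervalIntegrable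
  -- FTC for G = t^b * u1 * conj u
  set G : ℝ → ℂ := fun t => ((t^(b:ℝ) : ℝ) : ℂ) * (u1 t * star (u t)) with hGdef
  set Gd : ℝ → ℂ := fun t => ((b * t^(b-1:ℝ) : ℝ) : ℂ) * (u1 t * star (u t))
      + ((t^(b:ℝ) : ℝ) : ℂ) * (u2 t * star (u t) + u1 t * star (u1 t)) with hGddef
  have hGderiv : ∀ t ∈ Set.uIcc (0:ℝ) 1, HasDerivAt G (Gd t) t := by
    intro t ht
    have hw : HasDerivAt (fun s : ℝ => ((s^(b:ℝ) : ℝ) : ℂ)) (((b * t^(b-1:ℝ) : ℝ) : ℂ)) t :=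
      (Real.hasDerivAt_rpow_const (x := t) (p := b) (Or.inr hb1)).ofReal_comp
    have hc : HasDerivAt (fun s : ℝ => u1 s * star (u s))
        (u2 t * star (u t) + u1 t * star (u1 t)) t :=
      (hdu1 t ht).mul ((hdu t ht).star)
    exact hw.mul hc
  have hcGd : ContinuousOn Gd (Set.uIcc (0:ℝ) 1) := by
    refine ContinuousOn.add ?_ ?_
    · exact ((Complex.continuous_ofReal.comp (continuous_const.mul hcb1)).continuousOn).mul
        (hcu1.mul (continuous_star.comp_continuousOn hcu))
    · exact ((Complex.continuous_ofReal.comp hcb).continuousOn).mul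
        (((hcu2.mul (continuous_star.comp_continuousOn hcu))).add
          (hcu1.mul (continuous_star.comp_continuousOn hcu1)))
  have hFTC1 : ∫ t in (0:ℝ)..1, Gd t = G 1 - G 0 :=
    intervalIntegral.integral_eq_sub_of_hasDerivAt hGderiv hcGd.intervalIntegrable
  have hG1 : G 1 = 0 := by
    simp only [hGdef]; simp [hu1eq]
  have hG0 : G 0 = 0 := by
    simp only [hGdef]; simp [Real.zero_rpow (ne_of_gt hb0)]
  set E : ℝ → ℂ := fun t => ((F1 t : ℝ) : ℂ) + z * ((F3 t : ℝ) : ℂ)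
      + (z*I) * ((F4 t : ℝ) : ℂ) + ((a:ℝ):ℂ) * z * ((F2 t : ℝ) : ℂ) with hEdef
  have hEeq : Set.EqOn Gd E (Set.uIcc (0:ℝ) 1) := by
    intro t ht
    have hode := kummer_ode_s14 (a := a) (b := b) (z := z) ha hb0 (habs t ht)
    rw [← hu_def, ← hu1_def, ← hu2_def] at hode
    have ht01 : t ∈ Set.Icc (0:ℝ) 1 := by rwa [Set.uIcc_of_le zero_le_one] at ht
    rcases eq_or_lt_of_le ht01.1 with h0 | h0
    · simp only [hGddef, hEdef]
      rw [← h0]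
      have e1 : (0:ℝ)^(b:ℝ) = 0 := Real.zero_rpow (ne_of_gt hb0)
      have e2 : (0:ℝ)^(b-1:ℝ) = 0 := Real.zero_rpow (by intro hq; linarith)
      simp [hF1def, hF2def, hF3def, hF4def, e1, e2]
    · have hsplit : (t^(b:ℝ) : ℝ) = t^(b-1:ℝ) * t := by
        rw [Real.rpow_sub_one (ne_of_gt h0)]
        field_simp
      have hsplitC : ((t^(b:ℝ):ℝ):ℂ) = ((t^(b-1:ℝ):ℝ):ℂ) * (t:ℂ) := by
        rw [hsplit]; push_cast; ring
      have hmc1 : u1 t * star (u1 t) = (((u1 t).re^2 + (u1 t).im^2 : ℝ):ℂ) := by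
        rw [Complex.star_def, Complex.mul_conj, Complex.normSq_apply]
        push_cast; ring
      have hmc0 : u t * star (u t) = (((u t).re^2 + (u t).im^2 : ℝ):ℂ) := by
        rw [Complex.star_def, Complex.mul_conj, Complex.normSq_apply]
        push_cast; ring
      have hdec : ((t^(b:ℝ):ℝ):ℂ) * (u1 t * star (u t))
          = ((F3 t : ℝ):ℂ) + ((F4 t : ℝ):ℂ)*I := by
        simp only [hF3def, hF4def]
        rw [Complex.ext_iff]
        constructor <;>
          simp only [Complex.add_re, Complex.add_im, Complex.mul_re, Complex.mul_im,
            Complex.ofReal_re, Complex.ofReal_im, Complex.I_re, Complex.I_im,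
            Complex.star_def, Complex.conj_re, Complex.conj_im] <;> ring
      have hF1C : ((F1 t : ℝ):ℂ) = ((t^(b:ℝ):ℝ):ℂ) * (u1 t * star (u1 t)) := by
        rw [hmc1]; simp only [hF1def]; push_cast; ring
      have hF2C : ((F2 t : ℝ):ℂ) = ((t^(b-1:ℝ):ℝ):ℂ) * (u t * star (u t)) := by
        rw [hmc0]; simp only [hF2def]; push_cast; ring
      simp only [hGddef, hEdef]
      rw [hF1C, hF2C]
      push_cast
      linear_combination (((t^(b-1:ℝ):ℝ):ℂ) * star (u t)) * hode
        + ((u2 t - z * u1 t) * star (u t)) * hsplitC + z * hdec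
  have hEzero : ∫ t in (0:ℝ)..1, E t = 0 := by
    rw [← intervalIntegral.integral_congr hEeq, hFTC1, hG1, hG0, sub_zero]
  have hiC1 : IntervalIntegrable (fun t => ((F1 t : ℝ):ℂ)) MeasureTheory.volume 0 1 :=
    (Complex.continuous_ofReal.comp_continuousOn hcF1).intervalIntegrable
  have hiC3 : IntervalIntegrable (fun t => z * ((F3 t : ℝ):ℂ)) MeasureTheory.volume 0 1 :=
    (continuousOn_const.mul (Complex.continuous_ofReal.comp_continuousOn hcF3)).intervalIntegrable
  have hiC4 : IntervalIntegrable (fun t => (z*I) * ((F4 t : ℝ):ℂ)) MeasureTheory.volume 0 1 :=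
    (continuousOn_const.mul (Complex.continuous_ofReal.comp_continuousOn hcF4)).intervalIntegrable
  have hiC2 : IntervalIntegrable (fun t => ((a:ℝ):ℂ) * z * ((F2 t : ℝ):ℂ))
      MeasureTheory.volume 0 1 :=
    (continuousOn_const.mul (Complex.continuous_ofReal.comp_continuousOn hcF2)).intervalIntegrable
  have keyC : ((∫ t in (0:ℝ)..1, F1 t : ℝ) : ℂ) + z * ((∫ t in (0:ℝ)..1, F3 t : ℝ) : ℂ)
      + (z*I) * ((∫ t in (0:ℝ)..1, F4 t : ℝ) : ℂ)
      + ((a:ℝ):ℂ) * z * ((∫ t in (0:ℝ)..1, F2 t : ℝ) : ℂ) = 0 := by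
    rw [← hEzero]
    simp only [hEdef]
    rw [intervalIntegral.integral_add ((hiC1.add hiC3).add hiC4) hiC2,
      intervalIntegral.integral_add (hiC1.add hiC3) hiC4,
      intervalIntegral.integral_add hiC1 hiC3,
      intervalIntegral.integral_const_mul, intervalIntegral.integral_const_mul,
      intervalIntegral.integral_const_mul,
      intervalIntegral.integral_ofReal, intervalIntegral.integral_ofReal,
      intervalIntegral.integral_ofReal, intervalIntegral.integral_ofReal]
  have eqRe := congrArg Complex.re keyC
  have eqIm := congrArg Complex.im keyC
  simp only [Complex.add_re, Complex.add_im, Complex.mul_re, Complex.mul_im,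
    Complex.ofReal_re, Complex.ofReal_im, Complex.I_re, Complex.I_im,
    Complex.zero_re, Complex.zero_im] at eqRe eqIm
  -- second FTC, for H = t^b |u|^2
  set Hf : ℝ → ℝ := fun t => t^(b:ℝ) * ((u t).re^2 + (u t).im^2) with hHdef
  have hHderiv : ∀ t ∈ Set.uIcc (0:ℝ) 1, HasDerivAt Hf (b * F2 t + 2 * F3 t) t := by
    intro t ht
    have hre : HasDerivAt (fun s => (u s).re) ((u1 t).re) t := by
      have h' := (Complex.reCLM.hasFDerivAt (x := u t)).comp_hasDerivAt t (hdu t ht)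
      exact h'
    have him : HasDerivAt (fun s => (u s).im) ((u1 t).im) t := by
      have h' := (Complex.imCLM.hasFDerivAt (x := u t)).comp_hasDerivAt t (hdu t ht)
      exact h'
    have hw := Real.hasDerivAt_rpow_const (x := t) (p := b) (Or.inr hb1)
    have hprod := hw.mul ((hre.pow 2).add (him.pow 2))
    convert hprod using 1
    · rfl
    · rfl
    · rfl
    rw [hF2def, hF3def]
    have hsplit2 : (t^(b-1:ℝ) : ℝ) * t = t^(b:ℝ) ∨ t = 0 := by
      rcases eq_or_ne t 0 with h0 | h0
      · exact Or.inr h0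
      · left
        rw [Real.rpow_sub_one h0]
        field_simp
    rcases hsplit2 with hs | hs
    · push_cast
      simp only [Pi.add_apply, Pi.pow_apply, pow_one]
      nlinarith [hs]
    · rw [hs]
      have e1 : (0:ℝ)^(b:ℝ) = 0 := Real.zero_rpow (ne_of_gt hb0)
      have e2 : (0:ℝ)^(b-1:ℝ) = 0 := Real.zero_rpow (by intro hq; linarith)
      simp [e1, e2]
  have hFTC2 : ∫ t in (0:ℝ)..1, (b * F2 t + 2 * F3 t) = Hf 1 - Hf 0 :=
    intervalIntegral.integral_eq_sub_of_hasDerivAt hHderiv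
      ((hiF2.const_mul b).add (hiF3.const_mul 2))
  have hHf1 : Hf 1 = 0 := by
    simp only [hHdef]; simp [hu1eq]
  have hHf0 : Hf 0 = 0 := by
    simp only [hHdef]; simp [Real.zero_rpow (ne_of_gt hb0)]
  have eqH : b * (∫ t in (0:ℝ)..1, F2 t) + 2 * (∫ t in (0:ℝ)..1, F3 t) = 0 := by
    rw [← intervalIntegral.integral_const_mul, ← intervalIntegral.integral_const_mul,
      ← intervalIntegral.integral_add (hiF2.const_mul b) (hiF3.const_mul 2), hFTC2,
      hHf1, hHf0, sub_zero]
  -- positivity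
  have hSnn : 0 ≤ ∫ t in (0:ℝ)..1, F1 t := by
    refine intervalIntegral.integral_nonneg zero_le_one (fun s hs => ?_)
    simp only [hF1def]
    exact mul_nonneg (Real.rpow_nonneg hs.1 _) (by positivity)
  -- T0 > 0
  have hcu0 : ContinuousAt u 0 :=
    (hasDerivAt_W0 (z := z) ha hb0 (Metric.mem_ball_self two_pos)).continuousAt
  have hNuc : ContinuousAt (fun s => (u s).re^2 + (u s).im^2) 0 :=
    ((Complex.continuous_re.continuousAt.comp hcu0).pow 2).add
      ((Complex.continuous_im.continuousAt.comp hcu0).pow 2)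
  have hev : ∀ᶠ s in nhds (0:ℝ), 1/2 < (u s).re^2 + (u s).im^2 := by
    have hmem : Set.Ioi (1/2:ℝ) ∈ nhds ((fun s => (u s).re^2 + (u s).im^2) 0) := by
      have : ((fun s => (u s).re^2 + (u s).im^2) 0) = 1 := by simp [hu0]
      rw [this]
      exact Ioi_mem_nhds (by norm_num)
    exact hNuc hmem
  obtain ⟨ε, hε0, hεprop⟩ := Metric.eventually_nhds_iff.1 hev
  set δ := min (ε/2) 1 with hδdef
  have hδ0 : 0 < δ := lt_min (by linarith) one_pos
  have hδ1 : δ ≤ 1 := min_le_right _ _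
  have hsub1 : Set.uIcc (0:ℝ) δ ⊆ Set.uIcc (0:ℝ) 1 := by
    rw [Set.uIcc_of_le hδ0.le, Set.uIcc_of_le zero_le_one]
    exact Set.Icc_subset_Icc le_rfl hδ1
  have hsub2 : Set.uIcc δ (1:ℝ) ⊆ Set.uIcc (0:ℝ) 1 := by
    rw [Set.uIcc_of_le hδ1, Set.uIcc_of_le zero_le_one]
    exact Set.Icc_subset_Icc hδ0.le le_rfl
  have hpos1 : 0 < ∫ t in (0:ℝ)..δ, F2 t := by
    refine intervalIntegral.intervalIntegral_pos_of_pos_on (hiF2.mono_set hsub1)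
      (fun s hs => ?_) hδ0
    have hs0 : 0 < s := hs.1
    have hsd : dist s 0 < ε := by
      rw [Real.dist_eq, sub_zero, abs_of_pos hs0]
      have h1 : s < δ := hs.2
      have h2 : δ ≤ ε/2 := min_le_left _ _
      linarith
    have hNs := hεprop hsd
    simp only [hF2def]
    have hrp : 0 < s^(b-1:ℝ) := Real.rpow_pos_of_pos hs0 _
    nlinarith [hNs, hrp]
  have hpos2 : 0 ≤ ∫ t in δ..1, F2 t := by
    refine intervalIntegral.integral_nonneg hδ1 (fun s hs => ?_)
    simp only [hF2def]
    exact mul_nonneg (Real.rpow_nonneg (le_trans hδ0.le hs.1) _) (by positivity)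
  have hT0pos : 0 < ∫ t in (0:ℝ)..1, F2 t := by
    rw [← intervalIntegral.integral_add_adjacent_intervals (hiF2.mono_set hsub1)
      (hiF2.mono_set hsub2)]
    linarith
  have hz2 : 0 < z.re^2 + z.im^2 := by
    have := Complex.normSq_pos.2 hz
    rw [Complex.normSq_apply] at this
    nlinarith [this]
  have key : z.re * (∫ t in (0:ℝ)..1, F1 t)
      + (z.re^2 + z.im^2) * ((a - b/2) * (∫ t in (0:ℝ)..1, F2 t)) = 0 := by
    linear_combination z.re * eqRe + z.im * eqIm - ((z.re^2 + z.im^2)/2) * eqH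
  nlinarith [mul_nonneg hcon hSnn,
    mul_pos hz2 (mul_pos (show (0:ℝ) < a - b/2 by linarith) hT0pos), key]
end
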